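/- arXiv:2604.13376 — 4 statements merged into one kernel-verified Lean document; each statement's English description precedes it below -/
import Mathlib

section
/- Let φ̂₁ : X̂ → ℝ be bounded and measurable, let φ̂_n := Σ_{j=0}^{n-1} κ̂ʲφ̂₁ be its κ̂-additive process, and set φ_n(x) := sup_{z ∈ π⁻¹(x)} φ̂_n(z). Assume each φ_n is measurable. Then the sequence (φ_n) is κ-subadditive: for all n, m ≥ 1 and every x ∈ X, φ_{n+m}(x) ≤ φ_n(x) + ∫ φ_m d(κⁿ x), where κⁿ is the n-fold composition of the kernel κ. -/
open MeasureTheory ProbabilityTheory Filter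

noncomputable section

/-- The integral operator associated with a Markov kernel:
`(kernelOp q u) z = ∫ u d(q z)`. -/
def kernelOp {Z : Type*} [MeasurableSpace Z] (q : Kernel Z Z) (u : Z → ℝ) : Z → ℝ :=
  fun z => ∫ w, u w ∂(q z)

/-- `j`-fold application of the integral operator of a kernel. -/
def kernelOpIter {Z : Type*} [MeasurableSpace Z] (q : Kernel Z Z) : ℕ → (Z → ℝ) → (Z → ℝ)
  | 0 => fun u => u
  | n + 1 => fun u => kernelOp q (kernelOpIter q n u)

/-- The `n`-fold composition of a kernel, as a measure-valued map:
`kernelIterMeasure q n z` is the law of the `n`-th step of the chain started at `z`. -/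
def kernelIterMeasure {Z : Type*} [MeasurableSpace Z] (q : Kernel Z Z) : ℕ → Z → Measure Z
  | 0 => fun z => Measure.dirac z
  | n + 1 => fun z => (kernelIterMeasure q n z).bind (fun w => q w)

open scoped ENNReal

section Aux

variable {α β : Type*} [MeasurableSpace α] [MeasurableSpace β]

lemma integrable_of_abs_le {ν : Measure β} [IsFiniteMeasure ν] {u : β → ℝ} (hu : Measurable u)
    {B : ℝ} (hb : ∀ b, |u b| ≤ B) : Integrable u ν := by
  refine (integrable_const B).mono' hu.aestronglyMeasurable ?_
  filter_upwards with b using (by simpa using hb b)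

lemma measurable_integral_of_bound {f : α → Measure β} (hf : Measurable f)
    (hprob : ∀ a, IsProbabilityMeasure (f a)) {u : β → ℝ} (hu : Measurable u)
    {B : ℝ} (hb : ∀ b, |u b| ≤ B) :
    Measurable fun a => ∫ b, u b ∂(f a) := by
  have h1 : Measurable fun a => (∫⁻ b, ENNReal.ofReal (u b) ∂(f a)).toReal :=
    ((Measure.measurable_lintegral (hu.ennreal_ofReal)).comp hf).ennreal_toReal
  have h2 : Measurable fun a => (∫⁻ b, ENNReal.ofReal (-u b) ∂(f a)).toReal :=
    ((Measure.measurable_lintegral (hu.neg.ennreal_ofReal)).comp hf).ennreal_toReal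
  have : (fun a => ∫ b, u b ∂(f a)) = fun a =>
      (∫⁻ b, ENNReal.ofReal (u b) ∂(f a)).toReal - (∫⁻ b, ENNReal.ofReal (-u b) ∂(f a)).toReal := by
    funext a
    haveI := hprob a
    exact integral_eq_lintegral_pos_part_sub_lintegral_neg_part
      (integrable_of_abs_le hu hb)
  rw [this]
  exact h1.sub h2

lemma lintegral_ofReal_le {ν : Measure β} [IsProbabilityMeasure ν] {u : β → ℝ} {B : ℝ}
    (hb : ∀ b, |u b| ≤ B) : ∫⁻ b, ENNReal.ofReal (u b) ∂ν ≤ ENNReal.ofReal B := by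
  calc ∫⁻ b, ENNReal.ofReal (u b) ∂ν ≤ ∫⁻ _, ENNReal.ofReal B ∂ν :=
        lintegral_mono fun b => ENNReal.ofReal_le_ofReal ((abs_le.mp (hb b)).2)
    _ = ENNReal.ofReal B := by simp

lemma integral_bind_of_bound {μ : Measure α} [IsProbabilityMeasure μ]
    {f : α → Measure β} (hf : Measurable f) (hprob : ∀ a, IsProbabilityMeasure (f a))
    {u : β → ℝ} (hu : Measurable u) {B : ℝ} (hb : ∀ b, |u b| ≤ B) :
    ∫ b, u b ∂(μ.bind f) = ∫ a, ∫ b, u b ∂(f a) ∂μ := by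
  set B' := max B 0 with hB'
  have hb' : ∀ b, |u b| ≤ B' := fun b => le_trans (hb b) (le_max_left _ _)
  have hB'nn : 0 ≤ B' := le_max_right _ _
  haveI hbp : IsProbabilityMeasure (μ.bind f) := by
    constructor
    rw [Measure.bind_apply MeasurableSet.univ hf.aemeasurable]
    simp [fun a => (hprob a).measure_univ]
  set g1 : α → ℝ≥0∞ := fun a => ∫⁻ b, ENNReal.ofReal (u b) ∂(f a) with hg1
  set g2 : α → ℝ≥0∞ := fun a => ∫⁻ b, ENNReal.ofReal (-u b) ∂(f a) with hg2
  have hg1m : Measurable g1 := (Measure.measurable_lintegral hu.ennreal_ofReal).comp hf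
  have hg2m : Measurable g2 := (Measure.measurable_lintegral hu.neg.ennreal_ofReal).comp hf
  have hg1le : ∀ a, g1 a ≤ ENNReal.ofReal B' := fun a => by
    haveI := hprob a; exact lintegral_ofReal_le hb'
  have hg2le : ∀ a, g2 a ≤ ENNReal.ofReal B' := fun a => by
    haveI := hprob a
    exact lintegral_ofReal_le (u := fun b => -u b) (fun b => by simpa [abs_neg] using hb' b)
  have hg1lt : ∀ a, g1 a < ⊤ := fun a => lt_of_le_of_lt (hg1le a) ENNReal.ofReal_lt_top
  have hg2lt : ∀ a, g2 a < ⊤ := fun a => lt_of_le_of_lt (hg2le a) ENNReal.ofReal_lt_top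
  have hto1 : ∀ a, (g1 a).toReal ≤ B' := fun a =>
    ENNReal.toReal_le_of_le_ofReal hB'nn (hg1le a)
  have hto2 : ∀ a, (g2 a).toReal ≤ B' := fun a =>
    ENNReal.toReal_le_of_le_ofReal hB'nn (hg2le a)
  have hint1 : Integrable (fun a => (g1 a).toReal) μ :=
    integrable_of_abs_le hg1m.ennreal_toReal
      (fun a => by rw [abs_of_nonneg ENNReal.toReal_nonneg]; exact hto1 a)
  have hint2 : Integrable (fun a => (g2 a).toReal) μ :=
    integrable_of_abs_le hg2m.ennreal_toReal
      (fun a => by rw [abs_of_nonneg ENNReal.toReal_nonneg]; exact hto2 a)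
  have hrepr : ∀ a, ∫ b, u b ∂(f a) = (g1 a).toReal - (g2 a).toReal := fun a => by
    haveI := hprob a
    exact integral_eq_lintegral_pos_part_sub_lintegral_neg_part (integrable_of_abs_le hu hb)
  calc ∫ b, u b ∂(μ.bind f)
      = (∫⁻ b, ENNReal.ofReal (u b) ∂(μ.bind f)).toReal
        - (∫⁻ b, ENNReal.ofReal (-u b) ∂(μ.bind f)).toReal :=
        integral_eq_lintegral_pos_part_sub_lintegral_neg_part (integrable_of_abs_le hu hb)
    _ = (∫⁻ a, g1 a ∂μ).toReal - (∫⁻ a, g2 a ∂μ).toReal := by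
        rw [Measure.lintegral_bind hf.aemeasurable hu.ennreal_ofReal.aemeasurable,
          Measure.lintegral_bind (f := fun b => ENNReal.ofReal (-u b)) hf.aemeasurable hu.neg.ennreal_ofReal.aemeasurable]
    _ = (∫ a, (g1 a).toReal ∂μ) - (∫ a, (g2 a).toReal ∂μ) := by
        rw [integral_toReal hg1m.aemeasurable (Filter.Eventually.of_forall hg1lt),
          integral_toReal hg2m.aemeasurable (Filter.Eventually.of_forall hg2lt)]
    _ = ∫ a, ((g1 a).toReal - (g2 a).toReal) ∂μ := (integral_sub hint1 hint2).symm
    _ = ∫ a, ∫ b, u b ∂(f a) ∂μ := by simp_rw [hrepr]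

end Aux

section Kern

variable {Z : Type*} [MeasurableSpace Z] (q : Kernel Z Z) [IsMarkovKernel q]

lemma kernelIterMeasure_measurable (n : ℕ) : Measurable (kernelIterMeasure q n) := by
  induction n with
  | zero => exact Measure.measurable_dirac
  | succ n ih =>
    exact (Measure.measurable_bind' q.measurable).comp ih

instance kernelIterMeasure_prob (n : ℕ) (z : Z) :
    IsProbabilityMeasure (kernelIterMeasure q n z) := by
  induction n with
  | zero => exact Measure.dirac.isProbabilityMeasure
  | succ n ih =>
    constructor
    show (kernelIterMeasure q n z).bind (fun w => q w) Set.univ = 1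
    rw [Measure.bind_apply MeasurableSet.univ q.measurable.aemeasurable]
    simp

lemma kernelOpIter_comm (n : ℕ) (u : Z → ℝ) :
    kernelOpIter q n (kernelOp q u) = kernelOp q (kernelOpIter q n u) := by
  induction n with
  | zero => rfl
  | succ n ih => show kernelOp q (kernelOpIter q n (kernelOp q u)) = _; rw [ih]; rfl

lemma kernelOpIter_add (n j : ℕ) (u : Z → ℝ) :
    kernelOpIter q (n + j) u = kernelOpIter q n (kernelOpIter q j u) := by
  induction n with
  | zero => simp [kernelOpIter]
  | succ n ih =>
    have : n + 1 + j = (n + j) + 1 := by omega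
    rw [this]
    show kernelOp q (kernelOpIter q (n + j) u) = kernelOp q (kernelOpIter q n (kernelOpIter q j u))
    rw [ih]

lemma kernelOp_measurable {u : Z → ℝ} (hu : Measurable u) {B : ℝ} (hb : ∀ z, |u z| ≤ B) :
    Measurable (kernelOp q u) :=
  measurable_integral_of_bound q.measurable (fun _ => inferInstance) hu hb

lemma kernelOp_bdd {u : Z → ℝ} (hu : Measurable u) {B : ℝ} (hb : ∀ z, |u z| ≤ B) (z : Z) :
    |kernelOp q u z| ≤ B := by
  have hInt : Integrable u (q z) := integrable_of_abs_le hu hb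
  calc |∫ w, u w ∂(q z)| ≤ ∫ w, |u w| ∂(q z) := by
        simpa [Real.norm_eq_abs] using norm_integral_le_integral_norm (μ := q z) u
    _ ≤ ∫ _, B ∂(q z) := integral_mono hInt.abs (integrable_const B) (fun w => hb w)
    _ = B := by simp

lemma kernelOpIter_measurable_bdd {u : Z → ℝ} (hu : Measurable u) {B : ℝ}
    (hb : ∀ z, |u z| ≤ B) (n : ℕ) :
    Measurable (kernelOpIter q n u) ∧ ∀ z, |kernelOpIter q n u z| ≤ B := by
  induction n with
  | zero => exact ⟨hu, hb⟩
  | succ n ih =>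
    exact ⟨kernelOp_measurable q ih.1 ih.2, kernelOp_bdd q ih.1 ih.2⟩

lemma kernelOpIter_eq_integral {u : Z → ℝ} (hu : Measurable u) {B : ℝ}
    (hb : ∀ z, |u z| ≤ B) (n : ℕ) (z : Z) :
    kernelOpIter q n u z = ∫ w, u w ∂(kernelIterMeasure q n z) := by
  induction n generalizing u B with
  | zero => simp [kernelOpIter, kernelIterMeasure, integral_dirac' _ _ hu.stronglyMeasurable]
  | succ n ih =>
    show kernelIterMeasure q (n+1) z |> (fun ν => kernelOp q (kernelOpIter q n u) z = ∫ w, u w ∂ν)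
    show kernelOp q (kernelOpIter q n u) z
        = ∫ w, u w ∂((kernelIterMeasure q n z).bind (fun w => q w))
    rw [integral_bind_of_bound q.measurable (fun _ => inferInstance) hu hb]
    rw [← kernelOpIter_comm]
    exact ih (kernelOp_measurable q hu hb) (kernelOp_bdd q hu hb)

end Kern

lemma kernelIterMeasure_map_eq {Xh X : Type*} [MeasurableSpace Xh] [MeasurableSpace X]
    (π : Xh → X) (hπ_meas : Measurable π)
    (κh : Kernel Xh Xh) [IsMarkovKernel κh] (κ : Kernel X X) [IsMarkovKernel κ]
    (h_intertwine : ∀ z : Xh, (κh z).map π = κ (π z)) (n : ℕ) (z : Xh) :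
    (kernelIterMeasure κh n z).map π = kernelIterMeasure κ n (π z) := by
  induction n with
  | zero => exact Measure.map_dirac' hπ_meas z
  | succ n ih =>
    show ((kernelIterMeasure κh n z).bind (fun w => κh w)).map π
      = (kernelIterMeasure κ n (π z)).bind (fun y => κ y)
    have hdπ : Measurable fun w : Xh => Measure.dirac (π w) :=
      Measure.measurable_dirac.comp hπ_meas
    rw [← Measure.bind_dirac_eq_map _ hπ_meas,
      Measure.bind_bind κh.measurable.aemeasurable hdπ.aemeasurable]
    have h1 : (fun w => (κh w).bind (fun w' => Measure.dirac (π w'))) = fun w => κ (π w) := by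
      funext w
      rw [Measure.bind_dirac_eq_map _ hπ_meas, h_intertwine w]
    rw [h1, ← ih, ← Measure.bind_dirac_eq_map _ hπ_meas,
      Measure.bind_bind hdπ.aemeasurable κ.measurable.aemeasurable]
    congr 1
    funext w
    exact (Measure.dirac_bind κ.measurable (π w)).symm

/-- The fiberwise maximization of a `κ̂`-additive process is `κ`-subadditive. -/
theorem fiberwise_sup_is_subadditive
    {Xh X : Type*} [MeasurableSpace Xh] [MeasurableSpace X]
    (π : Xh → X) (hπ_meas : Measurable π) (hπ_surj : Function.Surjective π)
    (κh : Kernel Xh Xh) [IsMarkovKernel κh]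
    (κ : Kernel X X) [IsMarkovKernel κ]
    (h_intertwine : ∀ z : Xh, (κh z).map π = κ (π z))
    (φ1 : Xh → ℝ) (hφ1_meas : Measurable φ1)
    (C : ℝ) (hφ1_bdd : ∀ z, |φ1 z| ≤ C)
    (φh : ℕ → Xh → ℝ)
    (hφh : ∀ n z, φh n z = ∑ j ∈ Finset.range n, kernelOpIter κh j φ1 z)
    (φ : ℕ → X → ℝ)
    (hφ : ∀ n x, φ n x = sSup (φh n '' (π ⁻¹' {x})))
    (hφ_meas : ∀ n, Measurable (φ n)) :
    ∀ n m : ℕ, 1 ≤ n → 1 ≤ m → ∀ x : X,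
      φ (n + m) x ≤ φ n x + ∫ y, φ m y ∂(kernelIterMeasure κ n x) := by
  intro n m _ _ x
  set C' : ℝ := max C 0 with hC'
  have hφ1' : ∀ z, |φ1 z| ≤ C' := fun z => le_trans (hφ1_bdd z) (le_max_left _ _)
  have hC'nn : (0 : ℝ) ≤ C' := le_max_right _ _
  have hiter : ∀ j : ℕ, Measurable (kernelOpIter κh j φ1) ∧
      ∀ z, |kernelOpIter κh j φ1 z| ≤ C' :=
    fun j => kernelOpIter_measurable_bdd κh hφ1_meas hφ1' j
  -- measurability and bounds for φh
  have hφh_meas : ∀ k : ℕ, Measurable (φh k) := by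
    intro k
    have : φh k = fun z => ∑ j ∈ Finset.range k, kernelOpIter κh j φ1 z := funext (hφh k)
    rw [this]
    exact Finset.measurable_sum _ (fun j _ => (hiter j).1)
  have hφh_bdd : ∀ k : ℕ, ∀ z, |φh k z| ≤ k * C' := by
    intro k z
    rw [hφh k z]
    calc |∑ j ∈ Finset.range k, kernelOpIter κh j φ1 z|
        ≤ ∑ j ∈ Finset.range k, |kernelOpIter κh j φ1 z| := Finset.abs_sum_le_sum_abs _ _
      _ ≤ ∑ _ ∈ Finset.range k, C' := Finset.sum_le_sum (fun j _ => (hiter j).2 z)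
      _ = k * C' := by simp [mul_comm]
  -- the fiber image sets
  have hbdd : ∀ (k : ℕ) (y : X), BddAbove (φh k '' (π ⁻¹' {y})) := by
    intro k y
    exact ⟨k * C', by rintro r ⟨z, _, rfl⟩; exact (abs_le.mp (hφh_bdd k z)).2⟩
  have hne : ∀ (k : ℕ) (y : X), (φh k '' (π ⁻¹' {y})).Nonempty := by
    intro k y
    obtain ⟨z, hz⟩ := hπ_surj y
    exact ⟨φh k z, z, hz, rfl⟩
  have hle_sup : ∀ (k : ℕ) (z : Xh), φh k z ≤ φ k (π z) := by
    intro k z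
    rw [hφ]
    exact le_csSup (hbdd k (π z)) ⟨z, rfl, rfl⟩
  have hφ_bdd : ∀ (k : ℕ) (y : X), |φ k y| ≤ k * C' := by
    intro k y
    rw [hφ, abs_le]
    constructor
    · obtain ⟨r, ⟨z, _, rfl⟩⟩ := hne k y
      exact le_trans (abs_le.mp (hφh_bdd k z)).1 (le_csSup (hbdd k y) ⟨z, ‹_›, rfl⟩)
    · exact csSup_le (hne k y) (by rintro r ⟨z, _, rfl⟩; exact (abs_le.mp (hφh_bdd k z)).2)
  -- main estimate
  rw [hφ (n + m) x]
  apply csSup_le (hne (n + m) x)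
  rintro r ⟨z, hz, rfl⟩
  have hzx : π z = x := hz
  set νh := kernelIterMeasure κh n z with hνh
  -- split φh (n+m) z
  have hsplit : φh (n + m) z = φh n z + ∫ w, φh m w ∂νh := by
    rw [hφh (n + m) z, Finset.sum_range_add, ← hφh n z]
    congr 1
    have h1 : ∀ j, kernelOpIter κh (n + j) φ1 z = ∫ w, kernelOpIter κh j φ1 w ∂νh := by
      intro j
      rw [kernelOpIter_add]
      exact kernelOpIter_eq_integral κh (hiter j).1 (hiter j).2 n z
    calc ∑ j ∈ Finset.range m, kernelOpIter κh (n + j) φ1 z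
        = ∑ j ∈ Finset.range m, ∫ w, kernelOpIter κh j φ1 w ∂νh := by
          exact Finset.sum_congr rfl (fun j _ => h1 j)
      _ = ∫ w, ∑ j ∈ Finset.range m, kernelOpIter κh j φ1 w ∂νh :=
          (integral_finset_sum _ (fun j _ => integrable_of_abs_le (hiter j).1 (hiter j).2)).symm
      _ = ∫ w, φh m w ∂νh := by
          apply integral_congr_ae
          filter_upwards with w using (hφh m w).symm
  have hstep2 : ∫ w, φh m w ∂νh ≤ ∫ w, φ m (π w) ∂νh := by
    apply integral_mono (integrable_of_abs_le (hφh_meas m) (hφh_bdd m))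
      (integrable_of_abs_le ((hφ_meas m).comp hπ_meas) (fun w => hφ_bdd m (π w)))
    exact fun w => hle_sup m w
  have hstep3 : ∫ w, φ m (π w) ∂νh = ∫ y, φ m y ∂(kernelIterMeasure κ n x) := by
    rw [← hzx, ← kernelIterMeasure_map_eq π hπ_meas κh κ h_intertwine n z,
      integral_map hπ_meas.aemeasurable]
    exact (hφ_meas m).aestronglyMeasurable
  calc φh (n + m) z = φh n z + ∫ w, φh m w ∂νh := hsplit
    _ ≤ φ n x + ∫ y, φ m y ∂(kernelIterMeasure κ n x) := by
        apply add_le_add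
        · rw [← hzx]; exact hle_sup n z
        · rw [← hstep3]; exact hstep2


end
end

section
/- Let X and Y be Polish spaces with their Borel σ-algebras, let E ⊂ X × Y be a Borel set, and let u : X × Y → EReal be a Borel measurable function. Then the function M u : X → EReal defined by (Mu)(x) := ⨆_{y ∈ E_x} u(x, y), where E_x = {y ∈ Y : (x,y) ∈ E} and the supremum over an empty set is ⊥, is universally measurable: for every probability measure μ on X, the function Mu is AEMeasurable with respect to μ. -/
open MeasureTheory

open MeasureTheory Set Filter Topology ENNReal

section Capacitability

/-- Auxiliary recursion: build a sequence where each value is chosen (by `H`) depending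
on the strictly earlier values. -/
private noncomputable def buildSeq (H : (ℕ → ℕ) → ℕ → ℕ) : ℕ → ℕ
  | k => H (fun i => if h : i < k then buildSeq H i else 0) k
  decreasing_by exact h

private theorem buildSeq_eq (H : (ℕ → ℕ) → ℕ → ℕ) (k : ℕ) :
    buildSeq H k = H (fun i => if h : i < k then buildSeq H i else 0) k := by
  rw [buildSeq]

private theorem exists_le_add_of_le_iSup {g : ℕ → ℝ≥0∞} {a δ : ℝ≥0∞} (ha : a ≠ ⊤) (hδ : δ ≠ 0)
    (h : a ≤ ⨆ m, g m) : ∃ m, a ≤ g m + δ := by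
  rcases le_or_gt a δ with h' | h'
  · exact ⟨0, h'.trans le_add_self⟩
  · have ha0 : a ≠ 0 := fun h0 => by simp [h0] at h'
    have : a - δ < ⨆ m, g m := lt_of_lt_of_le (ENNReal.sub_lt_self ha ha0 hδ) h
    rw [lt_iSup_iff] at this
    obtain ⟨m, hm⟩ := this
    exact ⟨m, tsub_le_iff_right.mp hm.le⟩

private theorem geom_sum_le (ε : ℝ≥0∞) (k : ℕ) :
    (∑ j ∈ Finset.range k, ε / 2 ^ (j + 1)) ≤ ε := by
  have key : ∀ k : ℕ, (∑ j ∈ Finset.range k, ε / 2 ^ (j + 1)) + ε / 2 ^ k = ε := by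
    intro k
    induction k with
    | zero => simp
    | succ k ih =>
      rw [Finset.sum_range_succ, add_assoc]
      have : ε / 2 ^ (k + 1) + ε / 2 ^ (k + 1) = ε / 2 ^ k := by
        rw [ENNReal.div_add_div_same, pow_succ, mul_comm (2 ^ k) 2, ← two_mul,
          ENNReal.mul_div_mul_left _ _ (by norm_num) (by norm_num)]
      rw [this, ih]
  exact le_of_le_of_eq le_self_add (key k)

/-- Capacitability: the range of a continuous map from Baire space into a metric space is
null-measurable for every finite Borel measure. -/
private theorem range_nullMeasurableSet {α : Type*} [MetricSpace α] [MeasurableSpace α]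
    [OpensMeasurableSpace α] (μ : Measure α) [IsFiniteMeasure μ]
    {f : (ℕ → ℕ) → α} (hf : Continuous f) :
    NullMeasurableSet (Set.range f) μ := by
  have key : ∀ ε : ℝ≥0∞, ε ≠ 0 →
      ∃ K : Set α, IsClosed K ∧ K ⊆ range f ∧ μ (range f) ≤ μ K + ε := by
    intro ε hε
    -- Step choice:
    have step : ∀ (g : ℕ → ℕ) (k : ℕ), ∃ m : ℕ,
        μ (f '' {x | ∀ i < k, x i ≤ g i}) ≤
          μ (f '' {x | (∀ i < k, x i ≤ g i) ∧ x k ≤ m}) + ε / 2 ^ (k + 1) := by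
      intro g k
      have hU : {x : ℕ → ℕ | ∀ i < k, x i ≤ g i}
          = ⋃ m, {x | (∀ i < k, x i ≤ g i) ∧ x k ≤ m} := by
        ext x
        simp only [mem_setOf_eq, mem_iUnion]
        exact ⟨fun h => ⟨x k, h, le_rfl⟩, fun ⟨m, h, _⟩ => h⟩
      have hdir : Directed (· ⊆ ·)
          (fun m => f '' {x | (∀ i < k, x i ≤ g i) ∧ x k ≤ m}) := fun m m' =>
        ⟨max m m', image_mono (fun x hx => ⟨hx.1, hx.2.trans (le_max_left _ _)⟩),
          image_mono (fun x hx => ⟨hx.1, hx.2.trans (le_max_right _ _)⟩)⟩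
      have hsup : μ (f '' {x | ∀ i < k, x i ≤ g i})
          = ⨆ m, μ (f '' {x | (∀ i < k, x i ≤ g i) ∧ x k ≤ m}) := by
        rw [hU, image_iUnion, hdir.measure_iUnion]
      exact exists_le_add_of_le_iSup (measure_ne_top μ _)
        (by
          have h2 : (2 : ℝ≥0∞) ^ (k + 1) ≠ ⊤ := by
            exact ENNReal.pow_ne_top (by norm_num)
          simp [ENNReal.div_eq_top, hε, h2])
        hsup.le
    choose H hH using step
    set n : ℕ → ℕ := buildSeq H with hn
    set L : ℕ → Set (ℕ → ℕ) := fun k => {x | ∀ i < k, x i ≤ n i} with hL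
    have hstep : ∀ k, μ (f '' L k) ≤ μ (f '' L (k + 1)) + ε / 2 ^ (k + 1) := by
      intro k
      have hnk : n k = H (fun i => if h : i < k then n i else 0) k := by
        rw [hn]; exact buildSeq_eq H k
      have hg : ∀ i < k, (fun i => if h : i < k then n i else 0) i = n i := by
        intro i hi; simp [hi]
      have e1 : {x : ℕ → ℕ | ∀ i < k, x i ≤ (fun i => if h : i < k then n i else 0) i} = L k := by
        ext x; constructor
        · intro h i hi; rw [← hg i hi]; exact h i hi
        · intro h i hi; rw [hg i hi]; exact h i hi
      have e2 : {x : ℕ → ℕ | (∀ i < k, x i ≤ (fun i => if h : i < k then n i else 0) i) ∧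
          x k ≤ H (fun i => if h : i < k then n i else 0) k} = L (k + 1) := by
        ext x
        constructor
        · rintro ⟨h1, h2⟩ i hi
          rcases Nat.lt_succ_iff_lt_or_eq.1 hi with hi' | rfl
          · rw [← hg i hi']; exact h1 i hi'
          · rw [hnk]; exact h2
        · intro h
          refine ⟨fun i hi => by rw [hg i hi]; exact h i (hi.trans (Nat.lt_succ_self k)), ?_⟩
          rw [← hnk]; exact h k (Nat.lt_succ_self k)
      have := hH (fun i => if h : i < k then n i else 0) k
      rwa [e1, e2] at this
    have hmain : ∀ k, μ (range f) ≤ μ (f '' L k) + ∑ j ∈ Finset.range k, ε / 2 ^ (j + 1) := by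
      intro k
      induction k with
      | zero =>
        simp only [Finset.range_zero, Finset.sum_empty, add_zero]
        have : L 0 = univ := by ext x; simp [hL]
        rw [this, image_univ]
      | succ k ih =>
        calc μ (range f) ≤ μ (f '' L k) + ∑ j ∈ Finset.range k, ε / 2 ^ (j + 1) := ih
          _ ≤ (μ (f '' L (k + 1)) + ε / 2 ^ (k + 1)) + ∑ j ∈ Finset.range k, ε / 2 ^ (j + 1) :=
              add_le_add_left (hstep k) _
          _ = μ (f '' L (k + 1)) + ∑ j ∈ Finset.range (k + 1), ε / 2 ^ (j + 1) := by
              rw [Finset.sum_range_succ]; ring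
    -- the closed set
    refine ⟨⋂ k, closure (f '' L k), isClosed_iInter fun k => isClosed_closure, ?_, ?_⟩
    · -- K ⊆ range f : diagonal compactness argument
      intro y hy
      have hchoice : ∀ k : ℕ, ∃ w : ℕ → ℕ, w ∈ L (k + 1) ∧ dist y (f w) < 1 / (k + 1) := by
        intro k
        have h1 : y ∈ closure (f '' L (k + 1)) := mem_iInter.1 hy (k + 1)
        rcases Metric.mem_closure_iff.1 h1 (1 / (k + 1)) (by positivity) with ⟨b, hb, hby⟩
        rcases hb with ⟨w, hw, rfl⟩
        exact ⟨w, hw, hby⟩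
      choose x hxL hxd using hchoice
      set T : Set (ℕ → ℕ) := Set.pi univ (fun i => Iic (n i)) with hT
      have hTc : IsCompact T := isCompact_univ_pi fun i => (Set.finite_Iic (n i)).isCompact
      set z : ℕ → (ℕ → ℕ) := fun k i => if i ≤ k then x k i else 0 with hz
      have hzT : ∀ k, z k ∈ T := by
        intro k i _
        simp only [hz, mem_Iic]
        split
        · exact hxL k i (Nat.lt_succ_of_le ‹_›)
        · exact Nat.zero_le _
      obtain ⟨w, hwT, φ, hφ, hzw⟩ := hTc.tendsto_subseq hzT
      have hxw : Tendsto (fun j => x (φ j)) atTop (𝓝 w) := by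
        rw [tendsto_pi_nhds] at hzw ⊢
        intro i
        refine (hzw i).congr' ?_
        filter_upwards [eventually_ge_atTop i] with j hj
        have : i ≤ φ j := hj.trans (hφ.le_apply)
        simp [hz, this]
      have hfy : Tendsto (fun j => f (x (φ j))) atTop (𝓝 y) := by
        rw [tendsto_iff_dist_tendsto_zero]
        refine squeeze_zero (fun j => dist_nonneg) (fun j => ?_)
          tendsto_one_div_add_atTop_nhds_zero_nat
        rw [dist_comm]
        calc dist y (f (x (φ j))) ≤ 1 / (φ j + 1) := (hxd (φ j)).le
          _ ≤ 1 / (j + 1) := by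
              apply one_div_le_one_div_of_le (by positivity)
              have hj' : (j : ℝ) ≤ (φ j : ℝ) := Nat.cast_le.2 hφ.le_apply
              linarith
      have hfw : Tendsto (fun j => f (x (φ j))) atTop (𝓝 (f w)) :=
        (hf.tendsto w).comp hxw
      have : y = f w := tendsto_nhds_unique hfy hfw
      exact this ▸ mem_range_self w
    · -- measure bound
      have hmeas : ∀ k, NullMeasurableSet (closure (f '' L k)) μ := fun k =>
        isClosed_closure.measurableSet.nullMeasurableSet
      have hdir : Directed (· ⊇ ·) (fun k => closure (f '' L k)) := by
        have hanti : Antitone (fun k => closure (f '' L k)) := by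
          intro a b hab
          exact closure_mono (image_mono fun x hx i hi => hx i (hi.trans_le hab))
        exact hanti.directed_ge
      rw [Directed.measure_iInter hmeas hdir ⟨0, measure_ne_top μ _⟩]
      rw [ENNReal.iInf_add]
      refine le_iInf fun k => ?_
      calc μ (range f) ≤ μ (f '' L k) + ∑ j ∈ Finset.range k, ε / 2 ^ (j + 1) := hmain k
        _ ≤ μ (closure (f '' L k)) + ε :=
            add_le_add (measure_mono subset_closure) (geom_sum_le ε k)
  -- assemble
  choose K hKc hKs hKm using fun j : ℕ =>
    key ((j : ℝ≥0∞) + 1)⁻¹ (ENNReal.inv_ne_zero.2 (by simp))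
  set C : Set α := ⋃ j, K j with hC
  have hCm : MeasurableSet C := MeasurableSet.iUnion fun j => (hKc j).measurableSet
  have hCs : C ⊆ range f := iUnion_subset hKs
  have hCeq : μ C = μ (range f) := by
    refine le_antisymm (measure_mono hCs) ?_
    refine ENNReal.le_of_forall_pos_le_add fun ε hε _ => ?_
    obtain ⟨j, hj⟩ := ENNReal.exists_inv_nat_lt (show (ε : ℝ≥0∞) ≠ 0 by
      exact_mod_cast hε.ne')
    calc μ (range f) ≤ μ (K j) + ((j : ℝ≥0∞) + 1)⁻¹ := hKm j
      _ ≤ μ C + (j : ℝ≥0∞)⁻¹ :=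
          add_le_add (measure_mono (subset_iUnion K j)) (ENNReal.inv_le_inv.2 le_self_add)
      _ ≤ μ C + ε := add_le_add_right hj.le _
  have hdiff : μ (range f \ C) = 0 := by
    have h1 : range f \ C ⊆ toMeasurable μ (range f) \ C :=
      diff_subset_diff_left (subset_toMeasurable μ _)
    refine measure_mono_null h1 ?_
    have h2 : C ⊆ toMeasurable μ (range f) := hCs.trans (subset_toMeasurable μ _)
    rw [measure_diff h2 hCm.nullMeasurableSet (measure_ne_top μ _),
      measure_toMeasurable, ← hCeq, tsub_self]
  have : range f = C ∪ (range f \ C) := (union_diff_cancel hCs).symm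
  rw [this]
  exact hCm.nullMeasurableSet.union (NullMeasurableSet.of_null hdiff)

/-- Analytic sets in Polish spaces are null-measurable for every finite Borel measure. -/
private theorem analyticSet_nullMeasurableSet {α : Type*} [TopologicalSpace α] [PolishSpace α]
    [MeasurableSpace α] [BorelSpace α] (μ : Measure α) [IsFiniteMeasure μ]
    {s : Set α} (hs : AnalyticSet s) : NullMeasurableSet s μ := by
  letI := TopologicalSpace.upgradeIsCompletelyMetrizable α
  rw [AnalyticSet] at hs
  rcases hs with rfl | ⟨f, hf, rfl⟩
  · exact MeasurableSet.empty.nullMeasurableSet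
  · exact range_nullMeasurableSet μ hf

end Capacitability

noncomputable section

/-- The fiberwise supremum over the sections of a Borel set of a Borel
extended-real-valued function is universally measurable: it is `AEMeasurable` with respect
to every probability measure on the base. -/
theorem fiberwise_sup_universally_measurable
    {X Y : Type*}
    [TopologicalSpace X] [PolishSpace X] [MeasurableSpace X] [BorelSpace X]
    [TopologicalSpace Y] [PolishSpace Y] [MeasurableSpace Y] [BorelSpace Y]
    (E : Set (X × Y)) (hE : MeasurableSet E)
    (u : X × Y → EReal) (hu : Measurable u)
    (Mu : X → EReal)
    (hMu : ∀ x, Mu x = ⨆ y ∈ {y : Y | (x, y) ∈ E}, u (x, y)) :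
    ∀ μ : Measure X, IsProbabilityMeasure μ → AEMeasurable Mu μ := by
  intro μ hμ
  have hset : ∀ a : EReal, NullMeasurableSet (Mu ⁻¹' Set.Ioi a) μ := by
    intro a
    have himg : Mu ⁻¹' Set.Ioi a = Prod.fst '' (E ∩ u ⁻¹' Set.Ioi a) := by
      ext x
      simp only [Set.mem_preimage, Set.mem_Ioi, hMu x, lt_iSup_iff, Set.mem_setOf_eq,
        Set.mem_image, Set.mem_inter_iff, Prod.exists]
      constructor
      · rintro ⟨y, hy, hlt⟩
        exact ⟨x, y, ⟨hy, hlt⟩, rfl⟩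
      · rintro ⟨x', y, ⟨hy, hlt⟩, rfl⟩
        exact ⟨y, hy, hlt⟩
    rw [himg]
    have hB : MeasurableSet (E ∩ u ⁻¹' Set.Ioi a) := hE.inter (hu measurableSet_Ioi)
    have hA : AnalyticSet (Prod.fst '' (E ∩ u ⁻¹' Set.Ioi a)) :=
      hB.analyticSet.image_of_continuous continuous_fst
    exact analyticSet_nullMeasurableSet μ hA
  have hnm : NullMeasurable Mu μ :=
    measurable_of_Ioi (δ := MeasureTheory.NullMeasurableSpace X μ) (f := Mu) hset
  exact hnm.aemeasurable


end
end

section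
/- Let X be a standard Borel space, Y a compact metric space, and μ a probability measure on X. Let (ν_n) be a sequence in Prob_μ(X × Y) converging to ν ∈ Prob_μ(X × Y) in the Young-measure topology. Then for every bounded measurable u : X × Y → ℝ such that y ↦ u(x,y) is upper semicontinuous for every x ∈ X, one has limsup_{n→∞} ∫ u dν_n ≤ ∫ u dν. -/
open MeasureTheory Filter ProbabilityTheory
open scoped ENNReal NNReal Topology

noncomputable section

set_option maxHeartbeats 4000000 in
/-- Upper semicontinuity of integral functionals of fiberwise upper
semicontinuous bounded integrands along Young-measure convergent sequences of lifts. -/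
theorem young_measure_usc_integrand_limsup
    {X Y : Type*} [MeasurableSpace X] [StandardBorelSpace X]
    [MetricSpace Y] [CompactSpace Y] [MeasurableSpace Y] [BorelSpace Y]
    (μ : Measure X) [IsProbabilityMeasure μ]
    (ν : ℕ → Measure (X × Y))
    (hν_prob : ∀ n, IsProbabilityMeasure (ν n))
    (hν_fst : ∀ n, (ν n).map Prod.fst = μ)
    (νlim : Measure (X × Y)) (hνlim_prob : IsProbabilityMeasure νlim)
    (hνlim_fst : νlim.map Prod.fst = μ)
    (h_young : ∀ ψ : X × Y → ℝ, Measurable ψ → (∃ C, ∀ p, |ψ p| ≤ C) →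
      (∀ x : X, Continuous (fun y : Y => ψ (x, y))) →
      Tendsto (fun n => ∫ p, ψ p ∂(ν n)) atTop (nhds (∫ p, ψ p ∂νlim)))
    (u : X × Y → ℝ) (hu_meas : Measurable u)
    (C : ℝ) (hu_bdd : ∀ p, |u p| ≤ C)
    (hu_usc : ∀ x : X, UpperSemicontinuous (fun y : Y => u (x, y))) :
    limsup (fun n => ∫ p, u p ∂(ν n)) atTop ≤ ∫ p, u p ∂νlim := by
  classical
  haveI := hνlim_prob
  -- nonemptiness
  have hXY : Nonempty (X × Y) := by
    by_contra h
    haveI : IsEmpty (X × Y) := not_nonempty_iff.mp h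
    have h1 : (ν 0) Set.univ = 1 := (hν_prob 0).measure_univ
    rw [Set.univ_eq_empty_iff.mpr inferInstance] at h1
    simp at h1
  haveI : Nonempty Y := ⟨hXY.some.2⟩
  have hC0 : 0 ≤ C := le_trans (abs_nonneg _) (hu_bdd hXY.some)
  -- the dominating measure
  set L : Measure (X × Y) := νlim + Measure.sum (fun n => ((2 : ℝ≥0∞) ^ (n + 1))⁻¹ • ν n)
    with hLdef
  haveI hLfin : IsFiniteMeasure L := by
    constructor
    rw [hLdef, Measure.add_apply]
    have h2 : Measure.sum (fun n => ((2 : ℝ≥0∞) ^ (n + 1))⁻¹ • ν n) Set.univ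
        = ∑' n, ((2 : ℝ≥0∞)⁻¹) ^ (n + 1) := by
      rw [Measure.sum_apply _ MeasurableSet.univ]
      congr 1
      ext n
      rw [Measure.smul_apply, (hν_prob n).measure_univ, smul_eq_mul, mul_one, ENNReal.inv_pow]
    rw [h2, measure_univ]
    have h3 : ∑' n, ((2 : ℝ≥0∞)⁻¹) ^ (n + 1) ≤ ∑' n : ℕ, ((2 : ℝ≥0∞)⁻¹) ^ n :=
      ENNReal.tsum_le_tsum fun n =>
        pow_le_pow_of_le_one (by simp) (by simp [ENNReal.inv_le_one]) (Nat.le_succ n)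
    have h4 : ∑' n : ℕ, ((2 : ℝ≥0∞)⁻¹) ^ n = 2 := by
      rw [ENNReal.tsum_geometric]
      norm_num
    calc (1 : ℝ≥0∞) + ∑' n, ((2 : ℝ≥0∞)⁻¹) ^ (n + 1) ≤ 1 + 2 :=
          add_le_add le_rfl (h3.trans h4.le)
      _ < ⊤ := by norm_num
  have hνlimleL : ∀ A : Set (X × Y), νlim A ≤ L A := by
    intro A
    rw [hLdef, Measure.add_apply]
    exact le_self_add
  have hLnull : ∀ A : Set (X × Y), MeasurableSet A → L A = 0 →
      νlim A = 0 ∧ ∀ n, ν n A = 0 := by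
    intro A hA hA0
    rw [hLdef, Measure.add_apply, add_eq_zero] at hA0
    refine ⟨hA0.1, fun n => ?_⟩
    have h5 := hA0.2
    rw [Measure.sum_apply _ hA] at h5
    have hn := (ENNReal.tsum_eq_zero.mp h5) n
    rw [Measure.smul_apply, smul_eq_mul, mul_eq_zero] at hn
    rcases hn with h | h
    · exact absurd h (by simp)
    · exact h
  -- the graph map and disintegration
  set Φ : X × Y → X × (Y × ℝ) := fun p => (p.1, (p.2, u p)) with hΦdef
  have hΦ : Measurable Φ := measurable_fst.prodMk (measurable_snd.prodMk hu_meas)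
  set L' : Measure (X × (Y × ℝ)) := L.map Φ with hL'def
  haveI : IsFiniteMeasure L' := by
    constructor
    rw [hL'def, Measure.map_apply hΦ MeasurableSet.univ]
    exact measure_lt_top _ _
  set R : Kernel X (Y × ℝ) := L'.condKernel with hRdef
  haveI : IsMarkovKernel R := by rw [hRdef]; infer_instance
  -- dense sequence
  set e : ℕ → Y := TopologicalSpace.denseSeq Y with hedef
  have he : DenseRange e := TopologicalSpace.denseRange_denseSeq Y
  -- the scales
  set δ : ℕ → ℝ := fun k => (((k : ℝ) + 1)⁻¹) ^ 2 with hδdef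
  have hδpos : ∀ k, 0 < δ k := fun k => by positivity
  have hδle1 : ∀ k, δ k ≤ 1 := by
    intro k
    rw [hδdef]
    have h1 : ((k : ℝ) + 1)⁻¹ ≤ 1 := by
      rw [inv_le_one₀ (by positivity)]
      simp
    nlinarith [inv_nonneg.mpr (show (0:ℝ) ≤ (k:ℝ)+1 by positivity)]
  have hδanti : Antitone δ := by
    intro k k' hkk'
    have h1 : ((k' : ℝ) + 1)⁻¹ ≤ ((k : ℝ) + 1)⁻¹ := by
      apply inv_anti₀ (by positivity)
      have := (Nat.cast_le (α := ℝ)).mpr hkk'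
      linarith
    have h2 : (0:ℝ) ≤ ((k' : ℝ) + 1)⁻¹ := by positivity
    rw [hδdef]
    simp only []
    nlinarith
  -- rational balls
  set bl : ℕ × ℚ × ℚ → Set (Y × ℝ) :=
    fun j => Metric.ball ((e j.1, (j.2.1 : ℝ)) : Y × ℝ) (j.2.2 : ℝ) with hbldef
  have hblm : ∀ j, MeasurableSet (bl j) := fun j => Metric.isOpen_ball.measurableSet
  have hRblm : ∀ j, Measurable fun x => R x (bl j) := fun j => R.measurable_coe (hblm j)
  -- the index predicate and approximating functions
  set P : ℕ → ℕ × ℚ × ℚ → X → Prop := fun k j x =>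
    |(j.2.1 : ℝ)| ≤ C + 1 ∧ 0 < (j.2.2 : ℝ) ∧ (j.2.2 : ℝ) ≤ δ k ∧ 0 < R x (bl j) with hPdef
  set f : ℕ → ℕ × ℚ × ℚ → X → Y → ℝ := fun k j x y =>
    if P k j x then (j.2.1 : ℝ) + (j.2.2 : ℝ) - (k : ℝ) * max 0 (dist y (e j.1) - (j.2.2 : ℝ))
    else -C with hfdef
  set T : ℕ → X × Y → ℝ := fun k p => ⨆ j, f k j p.1 p.2 with hTdef
  -- elementary bounds
  have hfle : ∀ k j x y, f k j x y ≤ C + 2 := by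
    intro k j x y
    rw [hfdef]
    simp only []
    by_cases h : P k j x
    · rw [if_pos h]
      obtain ⟨h1, h2, h3, _⟩ := h
      have h4 : (0:ℝ) ≤ (k : ℝ) * max 0 (dist y (e j.1) - (j.2.2 : ℝ)) :=
        mul_nonneg (Nat.cast_nonneg _) (le_max_left _ _)
      have h5 : (j.2.1 : ℝ) ≤ C + 1 := le_trans (le_abs_self _) h1
      have h6 : (j.2.2 : ℝ) ≤ 1 := h3.trans (hδle1 k)
      linarith
    · rw [if_neg h]; linarith
  have hbdd : ∀ k x y, BddAbove (Set.range fun j => f k j x y) := by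
    intro k x y
    refine ⟨C + 2, ?_⟩
    rintro _ ⟨j, rfl⟩
    exact hfle k j x y
  have hfneg : ∀ k x y, f k (0, 0, -1) x y = -C := by
    intro k x y
    rw [hfdef]
    simp only []
    rw [if_neg]
    rw [hPdef]
    intro h
    have := h.2.1
    norm_num at this
  have hTge : ∀ k p, -C ≤ T k p := by
    intro k p
    rw [hTdef]
    simp only []
    rw [← hfneg k p.1 p.2]
    exact le_ciSup (hbdd k p.1 p.2) _
  have hTle : ∀ k p, T k p ≤ C + 2 := by
    intro k p
    rw [hTdef]
    exact ciSup_le fun j => hfle k j p.1 p.2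
  have hTabs : ∀ k p, |T k p| ≤ C + 2 := by
    intro k p
    rw [abs_le]
    exact ⟨by linarith [hTge k p], hTle k p⟩
  -- Lipschitz estimate in y
  have hflip : ∀ k j x (y y' : Y), f k j x y ≤ f k j x y' + (k : ℝ) * dist y y' := by
    intro k j x y y'
    rw [hfdef]
    simp only []
    by_cases h : P k j x
    · rw [if_pos h, if_pos h]
      have hmax : max 0 (dist y' (e j.1) - (j.2.2 : ℝ))
          ≤ max 0 (dist y (e j.1) - (j.2.2 : ℝ)) + dist y y' := by
        apply max_le
        · positivity
        · have h1 : dist y' (e j.1) ≤ dist y (e j.1) + dist y y' := by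
            have h3 := dist_triangle y' y (e j.1)
            rw [dist_comm y' y] at h3
            linarith
          have h2 : dist y (e j.1) - (j.2.2 : ℝ) ≤ max 0 (dist y (e j.1) - (j.2.2 : ℝ)) :=
            le_max_right _ _
          linarith
      nlinarith [Nat.cast_nonneg (α := ℝ) k, dist_nonneg (x := y) (y := y')]
    · rw [if_neg h, if_neg h]
      have : (0:ℝ) ≤ (k : ℝ) * dist y y' := mul_nonneg (Nat.cast_nonneg _) dist_nonneg
      linarith
  have hTlipest : ∀ k x (y y' : Y), T k (x, y) ≤ T k (x, y') + (k : ℝ) * dist y y' := by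
    intro k x y y'
    rw [hTdef]
    simp only []
    apply ciSup_le
    intro j
    exact (hflip k j x y y').trans (add_le_add (le_ciSup (hbdd k x y') j) le_rfl)
  have hTcont : ∀ k x, Continuous fun y => T k (x, y) := by
    intro k x
    have : LipschitzWith (k : ℝ≥0) fun y => T k (x, y) := by
      apply LipschitzWith.of_dist_le_mul
      intro y y'
      rw [Real.dist_eq, abs_le]
      constructor
      · have := hTlipest k x y' y
        rw [dist_comm y' y] at this
        push_cast
        linarith
      · have := hTlipest k x y y'
        push_cast
        linarith
    exact this.continuous
  -- measurability
  have hPm : ∀ k j, MeasurableSet {x | P k j x} := by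
    intro k j
    have h0 : {x | P k j x} = {x | |(j.2.1 : ℝ)| ≤ C + 1} ∩ ({x | 0 < (j.2.2 : ℝ)} ∩
        ({x | (j.2.2 : ℝ) ≤ δ k} ∩ {x | 0 < R x (bl j)})) := by
      rw [hPdef]
      ext x
      simp [Set.mem_setOf_eq, Set.mem_inter_iff]
    rw [h0]
    refine (MeasurableSet.const _).inter ((MeasurableSet.const _).inter
      ((MeasurableSet.const _).inter ?_))
    exact measurableSet_lt measurable_const (hRblm j)
  have hTmeas : ∀ k, Measurable (T k) := by
    intro k
    rw [hTdef]
    apply Measurable.iSup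
    intro j
    have : (fun p : X × Y => f k j p.1 p.2) = fun p : X × Y =>
        if P k j p.1 then (j.2.1 : ℝ) + (j.2.2 : ℝ)
          - (k : ℝ) * max 0 (dist p.2 (e j.1) - (j.2.2 : ℝ)) else -C := by
      rw [hfdef]
    rw [this]
    apply Measurable.ite (measurable_fst (hPm k j))
    · apply Measurable.sub measurable_const
      apply Measurable.const_mul
      exact (measurable_const.max ((measurable_snd.dist measurable_const).sub measurable_const))
    · exact measurable_const
  -- antitonicity in k
  have hTanti : ∀ p, Antitone fun k => T k p := by
    intro p k k' hkk'
    simp only []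
    rw [hTdef]
    simp only []
    apply ciSup_le
    intro j
    by_cases h' : P k' j p.1
    · have h : P k j p.1 := by
        rw [hPdef]
        exact ⟨h'.1, h'.2.1, h'.2.2.1.trans (hδanti hkk'), h'.2.2.2⟩
      have hval : f k' j p.1 p.2 ≤ f k j p.1 p.2 := by
        rw [hfdef]
        simp only []
        rw [if_pos h, if_pos h']
        have h1 : (k : ℝ) * max 0 (dist p.2 (e j.1) - (j.2.2 : ℝ))
            ≤ (k' : ℝ) * max 0 (dist p.2 (e j.1) - (j.2.2 : ℝ)) :=
          mul_le_mul_of_nonneg_right (Nat.cast_le.mpr hkk') (le_max_left _ _)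
        linarith
      exact hval.trans (le_ciSup (hbdd k p.1 p.2) j)
    · have hval : f k' j p.1 p.2 = -C := by
        rw [hfdef]; simp only []; rw [if_neg h']
      rw [hval]
      exact hTge k p
  -- the exceptional set
  set Bad : Set (X × (Y × ℝ)) := ⋃ j, {x | R x (bl j) = 0} ×ˢ bl j with hBdef
  have hBadm : MeasurableSet Bad := by
    rw [hBdef]
    exact MeasurableSet.iUnion fun j =>
      ((hRblm j) (measurableSet_singleton 0)).prod (hblm j)
  have hBadsec : ∀ x, R x (Prod.mk x ⁻¹' Bad) = 0 := by
    intro x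
    have h1 : Prod.mk x ⁻¹' Bad = ⋃ j, Prod.mk x ⁻¹' ({x | R x (bl j) = 0} ×ˢ bl j) := by
      rw [hBdef, Set.preimage_iUnion]
    rw [h1]
    apply measure_iUnion_null
    intro j
    by_cases hx : R x (bl j) = 0
    · have h2 : Prod.mk x ⁻¹' ({x | R x (bl j) = 0} ×ˢ bl j) = bl j :=
        by ext z; simp [hx]
      rw [h2]
      exact hx
    · have h2 : Prod.mk x ⁻¹' ({x | R x (bl j) = 0} ×ˢ bl j) = ∅ :=
        by ext z; simp [hx]
      rw [h2]
      simp
  have hL'Bad : L' Bad = 0 := by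
    have hdis : L'.fst ⊗ₘ R = L' := by
      rw [hRdef]
      exact L'.disintegrate L'.condKernel
    calc L' Bad = (L'.fst ⊗ₘ R) Bad := by rw [hdis]
      _ = ∫⁻ x, R x (Prod.mk x ⁻¹' Bad) ∂L'.fst := Measure.compProd_apply hBadm
      _ = 0 := by simp [hBadsec]
  have hLBad : L (Φ ⁻¹' Bad) = 0 := by
    have h1 := hL'Bad
    rw [hL'def, Measure.map_apply hΦ hBadm] at h1
    exact h1
  -- pointwise domination off the exceptional set
  have hdom : ∀ p : X × Y, p ∉ Φ ⁻¹' Bad → ∀ k, u p ≤ T k p := by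
    rintro ⟨x, y⟩ hp k
    obtain ⟨ε, hε0, hεlt⟩ := exists_rat_btwn (show (0:ℝ) < min (δ k) 1 from lt_min (hδpos k) one_pos)
    have hε0' : (0:ℝ) < (ε : ℝ) := hε0
    have hε1 : (ε : ℝ) ≤ 1 := le_of_lt (lt_of_lt_of_le hεlt (min_le_right _ _))
    have hεδ : (ε : ℝ) ≤ δ k := le_of_lt (lt_of_lt_of_le hεlt (min_le_left _ _))
    obtain ⟨i, hi⟩ := (Metric.denseRange_iff.mp he) y (ε : ℝ) hε0'
    obtain ⟨q, hq1, hq2⟩ := exists_rat_btwn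
      (show u (x, y) - (ε : ℝ) < u (x, y) by linarith)
    have hmem : ((y, u (x, y)) : Y × ℝ) ∈ bl (i, q, ε) := by
      rw [hbldef]
      simp only [Metric.mem_ball]
      rw [Prod.dist_eq]
      apply max_lt
      · exact hi
      · rw [Real.dist_eq, abs_lt]
        constructor
        · linarith
        · linarith
    have hR0 : R x (bl (i, q, ε)) ≠ 0 := by
      intro h0
      apply hp
      simp only [Set.mem_preimage, hΦdef]
      rw [hBdef]
      exact Set.mem_iUnion.mpr ⟨(i, q, ε), Set.mem_prod.mpr ⟨h0, hmem⟩⟩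
    have habsu := abs_le.mp (hu_bdd (x, y))
    have hP : P k (i, q, ε) x := by
      rw [hPdef]
      refine ⟨?_, hε0', hεδ, pos_iff_ne_zero.mpr hR0⟩
      rw [abs_le]
      constructor
      · linarith [habsu.1, habsu.2]
      · linarith [habsu.1, habsu.2]
    have hfval : u (x, y) ≤ f k (i, q, ε) x y := by
      rw [hfdef]
      simp only []
      rw [if_pos hP]
      have hmax : max 0 (dist y (e i) - (ε : ℝ)) = 0 := by
        apply max_eq_left
        linarith
      rw [hmax]
      simp only [mul_zero]
      push_cast
      linarith
    exact hfval.trans (le_ciSup (hbdd k x y) (i, q, ε))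
  -- integrability helpers
  have hIbd : ∀ (m : Measure (X × Y)) (g : X × Y → ℝ) (D : ℝ), IsFiniteMeasure m →
      Measurable g → (∀ p, |g p| ≤ D) → Integrable g m := by
    intro m g D hm hgm hgb
    haveI := hm
    refine ⟨hgm.aestronglyMeasurable, ?_⟩
    apply HasFiniteIntegral.of_bounded (C := D)
    exact ae_of_all _ fun p => by rw [Real.norm_eq_abs]; exact hgb p
  -- comparison of integrals along ν n
  have hcomp : ∀ n k, ∫ p, u p ∂(ν n) ≤ ∫ p, T k p ∂(ν n) := by
    intro n k
    haveI := hν_prob n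
    have hnull : ν n (Φ ⁻¹' Bad) = 0 := (hLnull _ (hΦ hBadm) hLBad).2 n
    refine integral_mono_ae (hIbd _ u C inferInstance hu_meas hu_bdd)
      (hIbd _ (T k) (C + 2) inferInstance (hTmeas k) (hTabs k)) ?_
    have hsub : {p | ¬ u p ≤ T k p} ⊆ Φ ⁻¹' Bad := by
      intro p hp
      by_contra h
      exact hp (hdom p h k)
    exact ae_iff.mpr (measure_mono_null hsub hnull)
  -- Young measure convergence for each T k
  have hYT : ∀ k, Tendsto (fun n => ∫ p, T k p ∂(ν n)) atTop (𝓝 (∫ p, T k p ∂νlim)) :=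
    fun k => h_young (T k) (hTmeas k) ⟨C + 2, hTabs k⟩ (fun x => hTcont k x)
  -- limsup bound for each k
  have hkey : ∀ k, limsup (fun n => ∫ p, u p ∂(ν n)) atTop ≤ ∫ p, T k p ∂νlim := by
    intro k
    have hlow : ∀ n, -C ≤ ∫ p, u p ∂(ν n) := by
      intro n
      haveI := hν_prob n
      have h1 : ∫ p, (-C : ℝ) ∂(ν n) ≤ ∫ p, u p ∂(ν n) := by
        apply integral_mono (integrable_const _) (hIbd _ u C inferInstance hu_meas hu_bdd)
        intro p
        exact (abs_le.mp (hu_bdd p)).1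
      rwa [integral_const, probReal_univ, one_smul] at h1
    have h1 : limsup (fun n => ∫ p, u p ∂(ν n)) atTop
        ≤ limsup (fun n => ∫ p, T k p ∂(ν n)) atTop := by
      have hb : IsBoundedUnder (· ≥ ·) atTop (fun n => ∫ p, u p ∂(ν n)) :=
        isBoundedUnder_of ⟨-C, fun n => hlow n⟩
      exact limsup_le_limsup (Filter.Eventually.of_forall fun n => hcomp n k)
        hb.isCoboundedUnder_le
        ((hYT k).isBoundedUnder_le)
    rwa [(hYT k).limsup_eq] at h1
  -- the limit function
  set Tinf : X × Y → ℝ := fun p => ⨅ k, T k p with hTinfdef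
  have hbddb : ∀ p, BddBelow (Set.range fun k => T k p) := by
    intro p
    refine ⟨-C, ?_⟩
    rintro _ ⟨k, rfl⟩
    exact hTge k p
  have hTinftend : ∀ p, Tendsto (fun k => T k p) atTop (𝓝 (Tinf p)) := by
    intro p
    rw [hTinfdef]
    exact tendsto_atTop_ciInf (hTanti p) (hbddb p)
  have hTinfmeas : Measurable Tinf := by
    rw [hTinfdef]; exact Measurable.iInf hTmeas
  have hTinfabs : ∀ p, |Tinf p| ≤ C + 2 := by
    intro p
    rw [abs_le]
    constructor
    · rw [hTinfdef]
      exact le_ciInf fun k => by linarith [hTge k p]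
    · rw [hTinfdef]
      exact (ciInf_le (hbddb p) 0).trans (hTle 0 p)
  have hlim2 : Tendsto (fun k => ∫ p, T k p ∂νlim) atTop (𝓝 (∫ p, Tinf p ∂νlim)) := by
    exact tendsto_integral_of_dominated_convergence (fun _ => C + 2)
      (fun k => (hTmeas k).aestronglyMeasurable) (integrable_const _)
      (fun k => ae_of_all _ fun p => by rw [Real.norm_eq_abs]; exact hTabs k p)
      (ae_of_all _ hTinftend)
  -- the hypograph
  set hyp : Set (X × (Y × ℝ)) := {q | q.2.2 ≤ u (q.1, q.2.1)} with hhypdef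
  have hhypm : MeasurableSet hyp := by
    rw [hhypdef]
    exact measurableSet_le (measurable_snd.snd)
      (hu_meas.comp (measurable_fst.prodMk measurable_snd.fst))
  have hL'c : L' hypᶜ = 0 := by
    rw [hL'def, Measure.map_apply hΦ hhypm.compl]
    have h1 : Φ ⁻¹' hypᶜ = ∅ := by
      ext p
      simp [hΦdef, hhypdef]
    rw [h1]
    simp
  have haeR : ∀ᵐ x ∂L'.fst, R x ((Prod.mk x ⁻¹' hyp)ᶜ) = 0 := by
    have h1 : ∫⁻ x, R x (Prod.mk x ⁻¹' hypᶜ) ∂L'.fst = 0 := by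
      have hdis : L'.fst ⊗ₘ R = L' := by rw [hRdef]; exact L'.disintegrate L'.condKernel
      rw [← Measure.compProd_apply hhypm.compl, hdis]
      exact hL'c
    have h2 := (lintegral_eq_zero_iff
      (Kernel.measurable_kernel_prodMk_left hhypm.compl)).mp h1
    filter_upwards [h2] with x hx
    exact hx
  -- auxiliary smallness facts about δ
  have hkε : ∀ k : ℕ, (k : ℝ) * δ k ≤ 1 := by
    intro k
    have h5 : (0:ℝ) < (k:ℝ) + 1 := by positivity
    have h6 : ((k:ℝ) + 1)⁻¹ * ((k:ℝ) + 1) = 1 := inv_mul_cancel₀ (ne_of_gt h5)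
    have h7 : (0:ℝ) ≤ ((k:ℝ) + 1)⁻¹ := by positivity
    rw [hδdef]
    simp only []
    nlinarith [sq_nonneg (((k:ℝ) + 1)⁻¹)]
  -- pointwise upper bound at good points
  have hgood : ∀ x, R x ((Prod.mk x ⁻¹' hyp)ᶜ) = 0 → ∀ y, Tinf (x, y) ≤ u (x, y) := by
    intro x hx y
    have habsu := abs_le.mp (hu_bdd (x, y))
    apply le_of_forall_pos_le_add
    intro η hη
    have husc := hu_usc x y (u (x, y) + η / 2) (by linarith)
    obtain ⟨r, hr0, hball⟩ := Metric.eventually_nhds_iff.mp husc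
    obtain ⟨k, hk⟩ := exists_nat_gt (max ((2 * C + 4) / r) (4 / η))
    have hk1 : 2 * C + 4 ≤ (k : ℝ) * r := by
      have h1 : (2 * C + 4) / r < (k : ℝ) := lt_of_le_of_lt (le_max_left _ _) hk
      rw [div_lt_iff₀ hr0] at h1
      linarith
    have hk2 : δ k ≤ η / 4 := by
      have h1 : 4 / η < (k : ℝ) := lt_of_le_of_lt (le_max_right _ _) hk
      have h2 : 4 / η ≤ (k : ℝ) + 1 := by linarith
      have h5 : (0:ℝ) < (k:ℝ) + 1 := by positivity
      have h4 : 4 ≤ η * ((k:ℝ) + 1) := by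
        rw [div_le_iff₀ hη] at h2
        linarith
      have h6 : ((k:ℝ) + 1)⁻¹ * ((k:ℝ) + 1) = 1 := inv_mul_cancel₀ (ne_of_gt h5)
      have h7 : (0:ℝ) ≤ ((k:ℝ) + 1)⁻¹ := by positivity
      have h8 : ((k:ℝ) + 1)⁻¹ ≤ η / 4 := by nlinarith
      have ha1 : ((k:ℝ) + 1)⁻¹ ≤ 1 := by
        rw [inv_le_one₀ h5]
        linarith
      have h9 : δ k ≤ ((k:ℝ) + 1)⁻¹ := by
        rw [hδdef]
        simp only []
        nlinarith
      linarith
    have hTk : T k (x, y) ≤ u (x, y) + η := by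
      rw [hTdef]
      simp only []
      apply ciSup_le
      intro j
      by_cases hP : P k j x
      · have hP' := hP
        rw [hPdef] at hP'
        obtain ⟨hq, hε0, hεδ, hRpos⟩ := hP'
        have hne : (bl j ∩ Prod.mk x ⁻¹' hyp).Nonempty := by
          rw [Set.nonempty_iff_ne_empty]
          intro hemp
          have hsub : bl j ⊆ (Prod.mk x ⁻¹' hyp)ᶜ := by
            intro z hz hz2
            exact absurd (Set.mem_inter hz hz2) (by rw [hemp]; exact Set.notMem_empty z)
          exact (ne_of_gt hRpos) (measure_mono_null hsub hx)
        obtain ⟨z, hzball, hzhyp⟩ := hne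
        have hzb : dist z ((e j.1, (j.2.1 : ℝ)) : Y × ℝ) < (j.2.2 : ℝ) := by
          rw [hbldef] at hzball
          exact Metric.mem_ball.mp hzball
        rw [Prod.dist_eq] at hzb
        have hd1 : dist z.1 (e j.1) < (j.2.2 : ℝ) :=
          lt_of_le_of_lt (le_max_left _ _) hzb
        have hd2 : |z.2 - (j.2.1 : ℝ)| < (j.2.2 : ℝ) := by
          have := lt_of_le_of_lt (le_max_right _ _) hzb
          rwa [Real.dist_eq] at this
        have ht : z.2 ≤ u (x, z.1) := hzhyp
        rw [hfdef]
        simp only []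
        rw [if_pos hP]
        have hq_le : (j.2.1 : ℝ) ≤ z.2 + (j.2.2 : ℝ) := by
          have := abs_lt.mp hd2
          linarith [this.1]
        have hεone : (j.2.2 : ℝ) ≤ 1 := hεδ.trans (hδle1 k)
        have habsu' := abs_le.mp (hu_bdd (x, z.1))
        by_cases hcase : dist z.1 y < r
        · have h5 : u (x, z.1) < u (x, y) + η / 2 := hball hcase
          have hmax0 : (0:ℝ) ≤ (k:ℝ) * max 0 (dist y (e j.1) - (j.2.2:ℝ)) :=
            mul_nonneg (Nat.cast_nonneg _) (le_max_left _ _)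
          have hδk : (j.2.2:ℝ) ≤ η / 4 := hεδ.trans hk2
          linarith
        · have hge : r ≤ dist z.1 y := not_lt.mp hcase
          have h7 := dist_triangle z.1 (e j.1) y
          have h7' : dist (e j.1) y = dist y (e j.1) := dist_comm _ _
          have h6 : r - (j.2.2:ℝ) ≤ dist y (e j.1) := by linarith
          have h8 : r - 2*(j.2.2:ℝ) ≤ max 0 (dist y (e j.1) - (j.2.2:ℝ)) :=
            le_trans (by linarith) (le_max_right _ _)
          have h9 : (k:ℝ) * (r - 2*(j.2.2:ℝ))
              ≤ (k:ℝ) * max 0 (dist y (e j.1) - (j.2.2:ℝ)) :=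
            mul_le_mul_of_nonneg_left h8 (Nat.cast_nonneg _)
          have hexp : (k:ℝ) * (r - 2*(j.2.2:ℝ))
              = (k:ℝ)*r - 2*((k:ℝ)*(j.2.2:ℝ)) := by ring
          rw [hexp] at h9
          have h10 : (k:ℝ) * (j.2.2:ℝ) ≤ 1 :=
            le_trans (mul_le_mul_of_nonneg_left hεδ (Nat.cast_nonneg _)) (hkε k)
          have hz2 : z.2 ≤ C := ht.trans habsu'.2
          linarith [habsu.1, hη.le]
      · rw [hfdef]
        simp only []
        rw [if_neg hP]
        linarith [habsu.1]
    calc Tinf (x, y) ≤ T k (x, y) := by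
          rw [hTinfdef]; exact ciInf_le (hbddb (x, y)) k
      _ ≤ u (x, y) + η := hTk
  -- the good set has full νlim-measure
  set G : Set X := {x | R x ((Prod.mk x ⁻¹' hyp)ᶜ) = 0} with hGdef
  have hGm : MeasurableSet G := by
    have h1 : Measurable fun x => R x (Prod.mk x ⁻¹' hypᶜ) :=
      Kernel.measurable_kernel_prodMk_left hhypm.compl
    exact h1 (measurableSet_singleton 0)
  have hGν : νlim (Prod.fst ⁻¹' Gᶜ) = 0 := by
    have h1 : L'.fst Gᶜ = 0 := by
      have h2 := ae_iff.mp haeR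
      have h3 : {x | ¬ R x ((Prod.mk x ⁻¹' hyp)ᶜ) = 0} = Gᶜ := by
        rw [hGdef]; rfl
      rwa [h3] at h2
    have h4 : L'.fst Gᶜ = L (Prod.fst ⁻¹' Gᶜ) := by
      rw [hL'def, Measure.fst_apply hGm.compl,
        Measure.map_apply hΦ (measurable_fst hGm.compl)]
      rfl
    have h5 : L (Prod.fst ⁻¹' Gᶜ) = 0 := by rw [← h4]; exact h1
    exact le_antisymm (h5 ▸ hνlimleL _) (by positivity)
  have hTinfle : ∀ᵐ p ∂νlim, Tinf p ≤ u p := by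
    apply ae_iff.mpr
    apply measure_mono_null ?_ hGν
    intro p hp
    simp only [Set.mem_setOf_eq] at hp
    simp only [Set.mem_preimage, Set.mem_compl_iff]
    intro h
    exact hp (hgood p.1 h p.2)
  -- conclusion
  have hfin : ∫ p, Tinf p ∂νlim ≤ ∫ p, u p ∂νlim :=
    integral_mono_ae (hIbd _ Tinf (C + 2) inferInstance hTinfmeas hTinfabs)
      (hIbd _ u C inferInstance hu_meas hu_bdd) hTinfle
  have hlimsup : limsup (fun n => ∫ p, u p ∂(ν n)) atTop ≤ ∫ p, Tinf p ∂νlim :=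
    ge_of_tendsto hlim2 (Filter.Eventually.of_forall hkey)
  exact hlimsup.trans hfin

end
end

section
/- Let X be a standard Borel space, Y a compact metric space, and μ a probability measure on X. Let (ν_n) be a sequence in Prob_μ(X × Y) converging to ν ∈ Prob_μ(X × Y) in the Young-measure topology. Let f : X × Y → ℝ be bounded measurable and let D_f := {(x,y) ∈ X × Y : the function y' ↦ f(x,y') is discontinuous at y}. If ν(D_f) = 0, then ∫ f dν_n → ∫ f dν as n → ∞. -/
open MeasureTheory Filter
open scoped ENNReal NNReal Topology

noncomputable section

namespace YoungAux

open ProbabilityTheory Topology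

variable {X Y : Type*} [MeasurableSpace X] [MetricSpace Y] [CompactSpace Y]
  [MeasurableSpace Y] [BorelSpace Y] [Nonempty Y]

variable (lam : Measure (X × Y)) [IsFiniteMeasure lam] (g : X × Y → ℝ) (C : ℝ)

/-- The conditional kernel of `lam`, pulled back to base `X × Y`. -/
noncomputable def ker : Kernel (X × Y) Y :=
  Kernel.comap lam.condKernel Prod.fst measurable_fst

instance : IsMarkovKernel (ker lam) := by
  unfold ker; infer_instance

lemma ker_apply (p : X × Y) : ker lam p = lam.condKernel p.1 := rfl

/-- `hh lam g k a p` measures the set of `y'` where the sup-convolution test at level `a` fails. -/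
def hh (k : ℕ) (a : ℚ) (p : X × Y) : ℝ≥0∞ :=
  ker lam p {y' | (a : ℝ) < g (p.1, y') - ((k : ℝ) + 1) * dist p.2 y'}

lemma measurable_hh (hg : Measurable g) (k : ℕ) (a : ℚ) : Measurable (hh lam g k a) := by
  have hS : MeasurableSet {q : (X × Y) × Y |
      (a : ℝ) < g (q.1.1, q.2) - ((k : ℝ) + 1) * dist q.1.2 q.2} := by
    apply measurableSet_lt measurable_const
    apply Measurable.sub
    · exact hg.comp (measurable_fst.fst.prodMk measurable_snd)
    · exact measurable_const.mul
        (measurable_dist.comp ((measurable_fst.snd).prodMk measurable_snd))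
  exact Kernel.measurable_kernel_prodMk_left (κ := ker lam) hS

/-- enumeration of ℚ -/
def e : ℕ → ℚ := Classical.choose (exists_surjective_nat ℚ)

lemma e_surj : Function.Surjective (e : ℕ → ℚ) :=
  Classical.choose_spec (exists_surjective_nat ℚ)

/-- candidate value at rational `a`. -/
def val (k : ℕ) (a : ℚ) (p : X × Y) : ℝ :=
  if hh lam g k a p = 0 then (a : ℝ) else C + 1

/-- running minimum of candidate values. -/
def FF (k : ℕ) : ℕ → (X × Y) → ℝ
  | 0 => val lam g C k (e 0)
  | m + 1 => fun p => min (FF k m p) (val lam g C k (e (m + 1)) p)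

/-- the envelope before clamping. -/
def iot (k : ℕ) (p : X × Y) : ℝ := ⨅ m, FF lam g C k m p

/-- The Carathéodory upper envelope of `g` at scale `k`. -/
def psi (k : ℕ) (p : X × Y) : ℝ := max (iot lam g C k p) (-C)

variable {lam g C}

section base

/-- large rationals are "good". -/
lemma hh_eq_zero_of_ge (hbdd : ∀ p, |g p| ≤ C) (k : ℕ) (a : ℚ) (p : X × Y) (ha : C ≤ (a : ℝ)) :
    hh lam g k a p = 0 := by
  have : {y' | (a : ℝ) < g (p.1, y') - ((k : ℝ) + 1) * dist p.2 y'} = (∅ : Set Y) := by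
    ext y'
    simp only [Set.mem_setOf_eq, Set.mem_empty_iff_false, iff_false, not_lt]
    have h1 : g (p.1, y') ≤ C := (abs_le.1 (hbdd _)).2
    have h2 : 0 ≤ ((k : ℝ) + 1) * dist p.2 y' := by positivity
    linarith
  rw [hh, this]
  simp

/-- good rationals are bounded below. -/
lemma lb_of_hh_eq_zero (hbdd : ∀ p, |g p| ≤ C) (k : ℕ) (a : ℚ) (p : X × Y) (ha : hh lam g k a p = 0) :
    -(C + ((k : ℝ) + 1) * Metric.diam (Set.univ : Set Y)) ≤ (a : ℝ) := by
  by_contra hlt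
  push_neg at hlt
  have : {y' | (a : ℝ) < g (p.1, y') - ((k : ℝ) + 1) * dist p.2 y'} = (Set.univ : Set Y) := by
    ext y'
    simp only [Set.mem_setOf_eq, Set.mem_univ, iff_true]
    have h1 : -C ≤ g (p.1, y') := (abs_le.1 (hbdd _)).1
    have h2 : dist p.2 y' ≤ Metric.diam (Set.univ : Set Y) :=
      Metric.dist_le_diam_of_mem isCompact_univ.isBounded (Set.mem_univ _) (Set.mem_univ _)
    have h3 : ((k : ℝ) + 1) * dist p.2 y' ≤ ((k : ℝ) + 1) * Metric.diam (Set.univ : Set Y) := by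
      apply mul_le_mul_of_nonneg_left h2; positivity
    linarith
  rw [hh, this] at ha
  simp [measure_univ] at ha

end base

variable {k : ℕ} {p : X × Y}

lemma FF_succ (m : ℕ) (p : X × Y) :
    FF lam g C k (m + 1) p = min (FF lam g C k m p) (val lam g C k (e (m + 1)) p) := rfl

section props

lemma val_lb (hbdd : ∀ p, |g p| ≤ C) (hC : 0 ≤ C) (a : ℚ) :
    -(C + ((k : ℝ) + 1) * Metric.diam (Set.univ : Set Y)) ≤ val lam g C k a p := by
  rw [val]
  split_ifs with h
  · exact lb_of_hh_eq_zero hbdd k a p h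
  · have hd : (0:ℝ) ≤ Metric.diam (Set.univ : Set Y) := Metric.diam_nonneg
    have : (0:ℝ) ≤ ((k : ℝ) + 1) * Metric.diam (Set.univ : Set Y) := by positivity
    linarith

lemma FF_lb (hbdd : ∀ p, |g p| ≤ C) (hC : 0 ≤ C) (m : ℕ) :
    -(C + ((k : ℝ) + 1) * Metric.diam (Set.univ : Set Y)) ≤ FF lam g C k m p := by
  induction m with
  | zero => exact val_lb hbdd hC _
  | succ m ih => exact le_min ih (val_lb hbdd hC _)

lemma FF_antitone : Antitone (fun m => FF lam g C k m p) :=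
  antitone_nat_of_succ_le fun m => min_le_left _ _

lemma FF_le_val {i m : ℕ} (him : i ≤ m) : FF lam g C k m p ≤ val lam g C k (e i) p := by
  induction m with
  | zero => rw [Nat.le_zero] at him; subst him; exact le_rfl
  | succ m ih =>
    rcases Nat.le_succ_iff.mp him with h | h
    · exact le_trans (min_le_left _ _) (ih h)
    · subst h; exact min_le_right _ _

lemma FF_eq_val (m : ℕ) : ∃ i ≤ m, FF lam g C k m p = val lam g C k (e i) p := by
  induction m with
  | zero => exact ⟨0, le_rfl, rfl⟩
  | succ m ih =>
    rcases ih with ⟨i, him, hi⟩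
    rcases le_total (FF lam g C k m p) (val lam g C k (e (m+1)) p) with h | h
    · exact ⟨i, him.trans (Nat.le_succ m), by rw [FF_succ, min_eq_left h, hi]⟩
    · exact ⟨m + 1, le_rfl, by rw [FF_succ, min_eq_right h]⟩

lemma bddBelow_FF (hbdd : ∀ p, |g p| ≤ C) (hC : 0 ≤ C) :
    BddBelow (Set.range fun m => FF lam g C k m p) := by
  refine ⟨-(C + ((k : ℝ) + 1) * Metric.diam (Set.univ : Set Y)), ?_⟩
  rintro x ⟨m, rfl⟩
  exact FF_lb hbdd hC m

lemma tendsto_FF_iot (hbdd : ∀ p, |g p| ≤ C) (hC : 0 ≤ C) :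
    Tendsto (fun m => FF lam g C k m p) atTop (𝓝 (iot lam g C k p)) :=
  tendsto_atTop_ciInf FF_antitone (bddBelow_FF hbdd hC)

/-- interface (I1) : the envelope is below every good rational. -/
lemma iot_le (hbdd : ∀ p, |g p| ≤ C) (hC : 0 ≤ C) (a : ℚ) (ha : hh lam g k a p = 0) :
    iot lam g C k p ≤ (a : ℝ) := by
  obtain ⟨i, hi⟩ := e_surj a
  calc iot lam g C k p ≤ FF lam g C k i p := ciInf_le (bddBelow_FF hbdd hC) i
  _ ≤ val lam g C k (e i) p := FF_le_val le_rfl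
  _ = (a : ℝ) := by rw [hi, val, if_pos (hi ▸ ha)]

/-- interface (I2) : lower bounds. -/
lemma le_iot (c : ℝ) (hc1 : ∀ a : ℚ, hh lam g k a p = 0 → c ≤ (a : ℝ)) (hc2 : c ≤ C + 1) :
    c ≤ iot lam g C k p := by
  refine le_ciInf fun m => ?_
  obtain ⟨i, _, hi⟩ := FF_eq_val (lam := lam) (g := g) (C := C) (k := k) (p := p) m
  rw [hi, val]
  split_ifs with h
  · exact hc1 _ h
  · exact hc2

/-- interface (I3) : approximate minimizers. -/
lemma exists_good_lt (hbdd : ∀ p, |g p| ≤ C) (hC : 0 ≤ C) {ε : ℝ} (hε : 0 < ε) :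
    ∃ a : ℚ, hh lam g k a p = 0 ∧ (a : ℝ) < iot lam g C k p + ε := by
  have hlt : iot lam g C k p < iot lam g C k p + ε := by linarith
  obtain ⟨m, hm⟩ := exists_lt_of_ciInf_lt (α := ℝ) hlt
  obtain ⟨i, _, hi⟩ := FF_eq_val (lam := lam) (g := g) (C := C) (k := k) (p := p) m
  rw [hi, val] at hm
  split_ifs at hm with h
  · exact ⟨e i, h, hm⟩
  · obtain ⟨a, ha1, ha2⟩ := exists_rat_btwn (lt_add_one C)
    exact ⟨a, hh_eq_zero_of_ge hbdd k a p ha1.le, by linarith⟩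

lemma iot_le_C_add_one (hbdd : ∀ p, |g p| ≤ C) (hC : 0 ≤ C) : iot lam g C k p ≤ C + 1 := by
  obtain ⟨a, ha1, ha2⟩ := exists_rat_btwn (lt_add_one C)
  exact (iot_le hbdd hC a (hh_eq_zero_of_ge hbdd k a p ha1.le)).trans ha2.le

lemma abs_psi_le (hbdd : ∀ p, |g p| ≤ C) (hC : 0 ≤ C) : |psi lam g C k p| ≤ C + 1 := by
  rw [abs_le]
  constructor
  · have : -C ≤ psi lam g C k p := le_max_right _ _
    linarith
  · exact max_le (iot_le_C_add_one hbdd hC) (by linarith)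

lemma measurable_iot (hg : Measurable g) (hbdd : ∀ p, |g p| ≤ C) (hC : 0 ≤ C) :
    Measurable (iot lam g C k) := by
  have hval : ∀ a : ℚ, Measurable (fun p : X × Y => val lam g C k a p) := by
    intro a
    have := measurable_hh lam g hg k a
    exact Measurable.ite (this (measurableSet_singleton 0)) measurable_const measurable_const
  have hFF : ∀ m, Measurable (fun p : X × Y => FF lam g C k m p) := by
    intro m
    induction m with
    | zero => exact hval (e 0)
    | succ m ih => exact ih.min (hval (e (m+1)))
  exact measurable_of_tendsto_metrizable hFF
    (tendsto_pi_nhds.2 fun p => tendsto_FF_iot hbdd hC)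

lemma measurable_psi (hg : Measurable g) (hbdd : ∀ p, |g p| ≤ C) (hC : 0 ≤ C) :
    Measurable (psi lam g C k) :=
  (measurable_iot hg hbdd hC).max measurable_const

/-- Lipschitz one-sided bound in the second variable. -/
lemma iot_lip (hbdd : ∀ p, |g p| ≤ C) (hC : 0 ≤ C) (x : X) (y₁ y₂ : Y) :
    iot lam g C k (x, y₂) ≤ iot lam g C k (x, y₁) + ((k : ℝ) + 1) * dist y₁ y₂ := by
  refine le_of_forall_pos_le_add fun ε hε => ?_
  obtain ⟨a, ha0, ha1⟩ := exists_good_lt (lam := lam) (g := g) (C := C) (k := k)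
    (p := (x, y₁)) hbdd hC (half_pos hε)
  obtain ⟨a', ha'1, ha'2⟩ := exists_rat_btwn
    (show (a : ℝ) + ((k : ℝ) + 1) * dist y₁ y₂
      < (a : ℝ) + ((k : ℝ) + 1) * dist y₁ y₂ + ε/2 by linarith)
  have hgood : hh lam g k a' (x, y₂) = 0 := by
    refine measure_mono_null ?_ ha0
    intro y' hy'
    simp only [Set.mem_setOf_eq] at hy' ⊢
    have htri : dist y₁ y' ≤ dist y₁ y₂ + dist y₂ y' := dist_triangle _ _ _
    have hknn : (0:ℝ) ≤ (k : ℝ) + 1 := by positivity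
    nlinarith [mul_le_mul_of_nonneg_left htri hknn]
  have h1 := iot_le hbdd hC a' hgood
  have h2 : (a' : ℝ) ≤ (a : ℝ) + ((k : ℝ) + 1) * dist y₁ y₂ + ε/2 := ha'2.le
  linarith

lemma continuous_psi (hbdd : ∀ p, |g p| ≤ C) (hC : 0 ≤ C) (x : X) :
    Continuous fun y => psi lam g C k (x, y) := by
  have hcont : Continuous fun y => iot lam g C k (x, y) := by
    rw [Metric.continuous_iff]
    intro b ε hε
    refine ⟨ε / ((k:ℝ) + 1), by positivity, fun a hab => ?_⟩
    have h1 := iot_lip (lam := lam) (g := g) (C := C) (k := k) hbdd hC x b a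
    have h2 := iot_lip (lam := lam) (g := g) (C := C) (k := k) hbdd hC x a b
    rw [dist_comm a b] at h2
    rw [Real.dist_eq, abs_lt]
    rw [dist_comm a b] at hab
    have hk1 : (0:ℝ) < (k:ℝ) + 1 := by positivity
    have hmul : ((k:ℝ) + 1) * dist b a < ((k:ℝ) + 1) * (ε / ((k:ℝ) + 1)) :=
      mul_lt_mul_of_pos_left hab hk1
    have heq : ((k:ℝ) + 1) * (ε / ((k:ℝ) + 1)) = ε := by field_simp
    constructor <;> nlinarith
  exact hcont.max continuous_const

lemma iot_succ_le (hbdd : ∀ p, |g p| ≤ C) (hC : 0 ≤ C) :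
    iot lam g C (k+1) p ≤ iot lam g C k p := by
  refine le_of_forall_pos_le_add fun ε hε => ?_
  obtain ⟨a, ha0, ha1⟩ := exists_good_lt (lam := lam) (g := g) (C := C) (k := k) (p := p) hbdd hC hε
  have hgood : hh lam g (k+1) a p = 0 := by
    refine measure_mono_null ?_ ha0
    intro y' hy'
    simp only [Set.mem_setOf_eq] at hy' ⊢
    have hd : (0:ℝ) ≤ dist p.2 y' := dist_nonneg
    push_cast at hy' ⊢
    nlinarith
  exact ((iot_le hbdd hC a hgood).trans ha1.le)

lemma psi_mono (hbdd : ∀ p, |g p| ≤ C) (hC : 0 ≤ C) {l m : ℕ} (hlm : l ≤ m) :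
    psi lam g C m p ≤ psi lam g C l p := by
  have key : ∀ n : ℕ, psi lam g C (l + n) p ≤ psi lam g C l p := by
    intro n
    induction n with
    | zero => exact le_rfl
    | succ n ih =>
      refine le_trans (max_le_max ?_ le_rfl) ih
      exact iot_succ_le hbdd hC
  have h := key (m - l)
  rwa [Nat.add_sub_cancel' hlm] at h

/-- Domination `g ≤ psi k` holds `lam`-a.e. -/
lemma ae_le_psi (hg : Measurable g) (hbdd : ∀ p, |g p| ≤ C) (hC : 0 ≤ C) (k : ℕ) :
    ∀ᵐ p ∂lam, g p ≤ psi lam g C k p := by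
  set Bad : Set (X × Y) := {p : X × Y | psi lam g C k p < g p} with hBadDef
  have hBad : MeasurableSet Bad :=
    measurableSet_lt (measurable_psi hg hbdd hC) hg
  have hnull : lam Bad = 0 := by
    have hrw : lam Bad = (lam.fst ⊗ₘ lam.condKernel) Bad := by
      rw [lam.disintegrate lam.condKernel]
    rw [hrw, Measure.compProd_apply hBad]
    have h0 : ∀ x, lam.condKernel x (Prod.mk x ⁻¹' Bad) = 0 := by
      intro x
      set ρ := lam.condKernel x with hρ
      set dseq : ℕ → Y := TopologicalSpace.denseSeq Y with hdseq
      set N : Set Y := ⋃ (j : ℕ) (s : ℚ) (b : ℚ),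
        if ρ (Metric.ball (dseq j) s ∩ {y' | (b:ℝ) < g (x, y')}) = 0 then
          Metric.ball (dseq j) s ∩ {y' | (b:ℝ) < g (x, y')} else ∅ with hN
      have hNnull : ρ N = 0 := by
        rw [hN]
        refine measure_iUnion_null fun j => measure_iUnion_null fun s =>
          measure_iUnion_null fun b => ?_
        split_ifs with h
        · exact h
        · exact measure_empty
      refine measure_mono_null ?_ hNnull
      intro y hy
      simp only [Set.mem_preimage, hBadDef, Set.mem_setOf_eq] at hy
      have hiy : iot lam g C k (x, y) < g (x, y) :=
        lt_of_le_of_lt (le_max_left _ _) hy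
      have hex : ∃ a : ℚ, hh lam g k a (x, y) = 0 ∧ (a : ℝ) < g (x, y) := by
        by_contra hcon
        push_neg at hcon
        have hgC : g (x, y) ≤ C + 1 := by
          have := (abs_le.1 (hbdd (x, y))).2; linarith
        have : g (x, y) ≤ iot lam g C k (x, y) :=
          le_iot _ (fun a ha => hcon a ha) hgC
        linarith
      obtain ⟨a, ha0, ha1⟩ := hex
      obtain ⟨b, hb1, hb2⟩ := exists_rat_btwn ha1
      set r : ℝ := ((b:ℝ) - (a:ℝ)) / (2 * ((k:ℝ) + 1)) with hr
      have hba : (a:ℝ) < (b:ℝ) := by exact_mod_cast hb1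
      have hrpos : 0 < r := by
        rw [hr]; apply div_pos (by linarith) (by positivity)
      obtain ⟨j, hj⟩ := (TopologicalSpace.denseRange_denseSeq Y).exists_dist_lt y (half_pos hrpos)
      obtain ⟨s, hs1, hs2⟩ := exists_rat_btwn (show dist y (dseq j) < r from hj.trans (by linarith))
      have hmem : y ∈ Metric.ball (dseq j) (s:ℝ) ∩ {y' | (b:ℝ) < g (x, y')} := by
        constructor
        · rw [Metric.mem_ball]
          exact hs1
        · exact hb2
      have hsub : Metric.ball (dseq j) (s:ℝ) ∩ {y' | (b:ℝ) < g (x, y')}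
          ⊆ {y' | (a:ℝ) < g (x, y') - ((k:ℝ) + 1) * dist y y'} := by
        rintro y' ⟨hy'1, hy'2⟩
        simp only [Set.mem_setOf_eq] at hy'2 ⊢
        have hd1 : dist y y' ≤ dist y (dseq j) + dist (dseq j) y' := dist_triangle _ _ _
        have hd2 : dist (dseq j) y' < (s:ℝ) := by
          rw [← Metric.mem_ball']; exact hy'1
        have hdy : dist y (dseq j) < (s:ℝ) := hs1
        have hss : dist y y' < 2 * (s:ℝ) := by linarith
        have hkd : ((k:ℝ) + 1) * dist y y' < ((k:ℝ) + 1) * (2 * r) := by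
          apply mul_lt_mul_of_pos_left _ (by positivity)
          linarith
        have h2r : ((k:ℝ) + 1) * (2 * r) = (b:ℝ) - (a:ℝ) := by
          rw [hr]; field_simp
        nlinarith
      have hznull : ρ {y' | (a:ℝ) < g (x, y') - ((k:ℝ) + 1) * dist y y'} = 0 := ha0
      have hpiece : ρ (Metric.ball (dseq j) (s:ℝ) ∩ {y' | (b:ℝ) < g (x, y')}) = 0 :=
        measure_mono_null hsub hznull
      rw [hN]
      refine Set.mem_iUnion.2 ⟨j, Set.mem_iUnion.2 ⟨s, Set.mem_iUnion.2 ⟨b, ?_⟩⟩⟩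
      rw [if_pos hpiece]
      exact hmem
    rw [lintegral_congr h0, lintegral_zero]
  rw [ae_iff]
  convert hnull using 2
  ext p
  simp [hBadDef, not_le]

/-- At fiberwise continuity points, the envelopes converge down to `g`. -/
lemma exists_psi_le (hbdd : ∀ p, |g p| ≤ C) (hC : 0 ≤ C) (p : X × Y)
    (hcont : ContinuousAt (fun y => g (p.1, y)) p.2)
    {δ : ℝ} (hδ : 0 < δ) : ∃ k : ℕ, psi lam g C k p ≤ g p + δ := by
  obtain ⟨r, hrpos, hr⟩ := Metric.continuousAt_iff.1 hcont (δ/2) (half_pos hδ)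
  obtain ⟨a, ha1, ha2⟩ := exists_rat_btwn (show g p + δ/2 < g p + δ by linarith)
  obtain ⟨k, hk⟩ := exists_nat_ge ((C - (a:ℝ)) / r)
  have hCk : C - ((k:ℝ) + 1) * r ≤ (a:ℝ) := by
    have h1 : (C - (a:ℝ)) / r ≤ (k:ℝ) := hk
    have h2 : C - (a:ℝ) ≤ (k:ℝ) * r := by
      rw [div_le_iff₀ hrpos] at h1; linarith
    nlinarith
  have hgood : hh lam g k a p = 0 := by
    have hempty : {y' | (a : ℝ) < g (p.1, y') - ((k : ℝ) + 1) * dist p.2 y'} = (∅ : Set Y) := by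
      ext y'
      simp only [Set.mem_setOf_eq, Set.mem_empty_iff_false, iff_false, not_lt]
      rcases lt_or_ge (dist y' p.2) r with hlt | hge
      · have hd := hr hlt
        rw [Real.dist_eq] at hd
        have h1 : g (p.1, y') < g p + δ/2 := by
          have hgp : g (p.1, p.2) = g p := rfl
          have := abs_lt.1 hd
          linarith [this.2]
        have h2 : (0:ℝ) ≤ ((k:ℝ) + 1) * dist p.2 y' := by positivity
        linarith
      · have h1 : g (p.1, y') ≤ C := (abs_le.1 (hbdd _)).2
        have h2 : r ≤ dist p.2 y' := by rwa [dist_comm]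
        have h3 : ((k:ℝ) + 1) * r ≤ ((k:ℝ) + 1) * dist p.2 y' := by
          apply mul_le_mul_of_nonneg_left h2; positivity
        linarith
    rw [hh, hempty]
    simp
  refine ⟨k, ?_⟩
  have h1 : iot lam g C k p ≤ (a:ℝ) := iot_le hbdd hC a hgood
  have h2 : -C ≤ g p := (abs_le.1 (hbdd p)).1
  exact max_le (h1.trans (by linarith)) (by linarith)

end props

end YoungAux

open YoungAux

/-- The packaged envelope existence lemma. -/
theorem exists_envelope {X Y : Type*} [MeasurableSpace X] [MetricSpace Y] [CompactSpace Y]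
    [MeasurableSpace Y] [BorelSpace Y] [Nonempty Y]
    (lam : Measure (X × Y)) [IsFiniteMeasure lam] (g : X × Y → ℝ) (hg : Measurable g)
    (C : ℝ) (hC : 0 ≤ C) (hbdd : ∀ p, |g p| ≤ C) :
    ∃ ψ : ℕ → (X × Y) → ℝ,
      (∀ k, Measurable (ψ k)) ∧
      (∀ k p, |ψ k p| ≤ C + 1) ∧
      (∀ k x, Continuous fun y => ψ k (x, y)) ∧
      (∀ k, ∀ᵐ p ∂lam, g p ≤ ψ k p) ∧
      (∀ p, ∀ l m : ℕ, l ≤ m → ψ m p ≤ ψ l p) ∧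
      (∀ p, ContinuousAt (fun y => g (p.1, y)) p.2 → ∀ δ : ℝ, 0 < δ → ∃ k, ψ k p ≤ g p + δ) :=
  ⟨psi lam g C,
    fun _ => measurable_psi hg hbdd hC,
    fun _ _ => abs_psi_le hbdd hC,
    fun _ x => continuous_psi hbdd hC x,
    fun k => ae_le_psi hg hbdd hC k,
    fun _ _ _ hlm => psi_mono hbdd hC hlm,
    fun p hcont δ hδ => exists_psi_le hbdd hC p hcont hδ⟩

/-- Integrals of uniformly bounded functions against probability measures are bounded. -/
lemma abs_integral_le_of_abs_le {α : Type*} [MeasurableSpace α] (m : Measure α)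
    [IsProbabilityMeasure m] (g : α → ℝ) (c : ℝ) (hb : ∀ p, |g p| ≤ c) :
    |∫ p, g p ∂m| ≤ c := by
  have h := norm_integral_le_of_norm_le_const (μ := m) (C := c) (f := g)
    (Filter.Eventually.of_forall fun p => by rw [Real.norm_eq_abs]; exact hb p)
  rwa [Real.norm_eq_abs, probReal_univ, mul_one] at h

lemma integrable_of_abs_le_s11 {α : Type*} [MeasurableSpace α] (m : Measure α)
    [IsProbabilityMeasure m] (g : α → ℝ) (hm : Measurable g) (c : ℝ) (hb : ∀ p, |g p| ≤ c) :
    Integrable g m :=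
  Integrable.mono' (integrable_const c) hm.aestronglyMeasurable
    (Filter.Eventually.of_forall fun p => by rw [Real.norm_eq_abs]; exact hb p)

/-- Young-measure convergence of integrals for bounded integrands whose
set of fiberwise discontinuity points is null for the limit measure. -/
theorem young_measure_ae_continuous_integrand
    {X Y : Type*} [MeasurableSpace X] [StandardBorelSpace X]
    [MetricSpace Y] [CompactSpace Y] [MeasurableSpace Y] [BorelSpace Y]
    (μ : Measure X) [IsProbabilityMeasure μ]
    (ν : ℕ → Measure (X × Y))
    (hν_prob : ∀ n, IsProbabilityMeasure (ν n))
    (hν_fst : ∀ n, (ν n).map Prod.fst = μ)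
    (νlim : Measure (X × Y)) (hνlim_prob : IsProbabilityMeasure νlim)
    (hνlim_fst : νlim.map Prod.fst = μ)
    (h_young : ∀ ψ : X × Y → ℝ, Measurable ψ → (∃ C, ∀ p, |ψ p| ≤ C) →
      (∀ x : X, Continuous (fun y : Y => ψ (x, y))) →
      Tendsto (fun n => ∫ p, ψ p ∂(ν n)) atTop (nhds (∫ p, ψ p ∂νlim)))
    (f : X × Y → ℝ) (hf_meas : Measurable f)
    (C : ℝ) (hf_bdd : ∀ p, |f p| ≤ C)
    (hDf : νlim {p : X × Y | ¬ ContinuousAt (fun y : Y => f (p.1, y)) p.2} = 0) :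
    Tendsto (fun n => ∫ p, f p ∂(ν n)) atTop (nhds (∫ p, f p ∂νlim)) := by
  haveI := hνlim_prob
  haveI := fun n => hν_prob n
  -- `Y` is nonempty (otherwise `νlim` could not be a probability measure)
  rcases isEmpty_or_nonempty Y with hY | hY
  · exfalso
    have h1 : νlim Set.univ = 1 := measure_univ
    rw [Set.univ_eq_empty_iff.2 inferInstance, measure_empty] at h1
    exact zero_ne_one h1
  -- `X × Y` is nonempty
  rcases isEmpty_or_nonempty X with hX | hX
  · exfalso
    have h1 : μ Set.univ = 1 := measure_univ
    rw [Set.univ_eq_empty_iff.2 inferInstance, measure_empty] at h1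
    exact zero_ne_one h1
  have hC0 : 0 ≤ C := by
    obtain ⟨p₀⟩ : Nonempty (X × Y) := inferInstance
    exact (abs_nonneg (f p₀)).trans (hf_bdd p₀)
  -- the dominating measure
  set lam : Measure (X × Y) :=
    νlim + Measure.sum (fun n => ((2 : ℝ≥0∞)⁻¹) ^ (n + 1) • ν n) with hlam
  have hlam_fin : lam Set.univ < ⊤ := by
    rw [hlam, Measure.add_apply, Measure.sum_apply _ MeasurableSet.univ]
    have h1 : νlim Set.univ = 1 := measure_univ
    have h2 : ∀ n : ℕ, (((2 : ℝ≥0∞)⁻¹) ^ (n + 1) • ν n) Set.univ = ((2 : ℝ≥0∞)⁻¹) ^ (n + 1) := by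
      intro n
      rw [Measure.smul_apply, smul_eq_mul, measure_univ, mul_one]
    rw [h1]
    simp_rw [h2]
    have h3 : ∑' n : ℕ, ((2 : ℝ≥0∞)⁻¹) ^ (n + 1) ≤ ∑' n : ℕ, ((2 : ℝ≥0∞)⁻¹) ^ n :=
      ENNReal.tsum_le_tsum fun n => pow_le_pow_of_le_one (zero_le)
        (by simp [ENNReal.inv_le_one]) (Nat.le_succ n)
    have h4 : ∑' n : ℕ, ((2 : ℝ≥0∞)⁻¹) ^ n = (1 - 2⁻¹)⁻¹ := ENNReal.tsum_geometric _
    have h5 : (1 - (2:ℝ≥0∞)⁻¹)⁻¹ = 2 := by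
      rw [ENNReal.one_sub_inv_two, inv_inv]
    calc 1 + ∑' n : ℕ, ((2 : ℝ≥0∞)⁻¹) ^ (n + 1)
        ≤ 1 + ∑' n : ℕ, ((2 : ℝ≥0∞)⁻¹) ^ n := add_le_add le_rfl h3
    _ = 1 + 2 := by rw [h4, h5]
    _ < ⊤ := by norm_num
  haveI : IsFiniteMeasure lam := ⟨hlam_fin⟩
  -- absolute continuity
  have haclim : νlim ≪ lam := by
    intro s hs
    have hle : νlim s ≤ lam s := by
      rw [hlam, Measure.add_apply]
      exact le_add_right le_rfl
    exact le_antisymm (hle.trans hs.le) (zero_le)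
  have hacn : ∀ n, ν n ≪ lam := by
    intro n s hs
    have hle : (((2 : ℝ≥0∞)⁻¹) ^ (n + 1) • ν n) s ≤ lam s := by
      have h1 : ((2 : ℝ≥0∞)⁻¹) ^ (n + 1) • ν n ≤ Measure.sum
          (fun n => ((2 : ℝ≥0∞)⁻¹) ^ (n + 1) • ν n) := Measure.le_sum _ n
      have h2 : Measure.sum (fun n => ((2 : ℝ≥0∞)⁻¹) ^ (n + 1) • ν n) ≤ lam := by
        rw [hlam]; exact Measure.le_add_left le_rfl
      exact (h1.trans h2) s
    rw [hs] at hle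
    have h0 : (((2 : ℝ≥0∞)⁻¹) ^ (n + 1)) * ν n s = 0 := by
      have := le_antisymm hle (zero_le)
      rwa [Measure.smul_apply, smul_eq_mul] at this
    rcases mul_eq_zero.1 h0 with h | h
    · exact absurd h (pow_ne_zero _ (by simp))
    · exact h
  -- envelopes for `f` and `-f`
  obtain ⟨ψ, hψm, hψb, hψc, hψdom, hψmono, hψlim⟩ :=
    exists_envelope lam f hf_meas C hC0 hf_bdd
  obtain ⟨χ, hχm, hχb, hχc, hχdom, hχmono, hχlim⟩ :=
    exists_envelope lam (fun p => -f p) hf_meas.neg C hC0 (fun p => by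
      rw [abs_neg]; exact hf_bdd p)
  -- a.e. facts for νlim
  have hcontae : ∀ᵐ p ∂νlim, ContinuousAt (fun y : Y => f (p.1, y)) p.2 := ae_iff.2 hDf
  have hψdom_lim : ∀ᵐ p ∂νlim, ∀ k, f p ≤ ψ k p :=
    ae_all_iff.2 fun k => (hψdom k).filter_mono haclim.ae_le
  have hχdom_lim : ∀ᵐ p ∂νlim, ∀ k, -f p ≤ χ k p :=
    ae_all_iff.2 fun k => (hχdom k).filter_mono haclim.ae_le
  -- dominated convergence : the envelope integrals converge
  have hψae_tendsto : ∀ᵐ p ∂νlim, Tendsto (fun k => ψ k p) atTop (𝓝 (f p)) := by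
    filter_upwards [hcontae, hψdom_lim] with p h1 h2
    rw [Metric.tendsto_atTop]
    intro ε hε
    obtain ⟨k₀, hk₀⟩ := hψlim p h1 (ε/2) (half_pos hε)
    refine ⟨k₀, fun k hk => ?_⟩
    have hle := hψmono p k₀ k hk
    have hge := h2 k
    rw [Real.dist_eq, abs_lt]
    constructor <;> nlinarith
  have hχae_tendsto : ∀ᵐ p ∂νlim, Tendsto (fun k => χ k p) atTop (𝓝 (-f p)) := by
    filter_upwards [hcontae, hχdom_lim] with p h1 h2
    have h1' : ContinuousAt (fun y : Y => -f (p.1, y)) p.2 := h1.neg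
    rw [Metric.tendsto_atTop]
    intro ε hε
    obtain ⟨k₀, hk₀⟩ := hχlim p h1' (ε/2) (half_pos hε)
    refine ⟨k₀, fun k hk => ?_⟩
    have hle := hχmono p k₀ k hk
    have hge := h2 k
    rw [Real.dist_eq, abs_lt]
    constructor <;> nlinarith
  have hψint : Tendsto (fun k => ∫ p, ψ k p ∂νlim) atTop (𝓝 (∫ p, f p ∂νlim)) :=
    tendsto_integral_of_dominated_convergence (fun _ => C + 1)
      (fun k => (hψm k).aestronglyMeasurable) (integrable_const _)
      (fun k => Filter.Eventually.of_forall fun p => by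
        rw [Real.norm_eq_abs]; exact hψb k p) hψae_tendsto
  have hχint : Tendsto (fun k => ∫ p, χ k p ∂νlim) atTop (𝓝 (∫ p, -f p ∂νlim)) :=
    tendsto_integral_of_dominated_convergence (fun _ => C + 1)
      (fun k => (hχm k).aestronglyMeasurable) (integrable_const _)
      (fun k => Filter.Eventually.of_forall fun p => by
        rw [Real.norm_eq_abs]; exact hχb k p) hχae_tendsto
  -- notation
  set A : ℕ → ℝ := fun n => ∫ p, f p ∂(ν n) with hA
  -- boundedness facts
  have hAabs : ∀ n, |A n| ≤ C := fun n => abs_integral_le_of_abs_le (ν n) f C hf_bdd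
  have hAbd_le : IsBoundedUnder (· ≤ ·) atTop A :=
    isBoundedUnder_of ⟨C, fun n => (le_abs_self _).trans (hAabs n)⟩
  have hAbd_ge : IsBoundedUnder (· ≥ ·) atTop A :=
    isBoundedUnder_of ⟨-C, fun n => neg_le_of_abs_le (hAabs n)⟩
  -- integrability of everything
  have hInt_f : ∀ n, Integrable f (ν n) := fun n => integrable_of_abs_le_s11 _ f hf_meas C hf_bdd
  have hInt_ψ : ∀ n k, Integrable (ψ k) (ν n) := fun n k =>
    integrable_of_abs_le_s11 _ (ψ k) (hψm k) (C + 1) (hψb k)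
  have hInt_χ : ∀ n k, Integrable (χ k) (ν n) := fun n k =>
    integrable_of_abs_le_s11 _ (χ k) (hχm k) (C + 1) (hχb k)
  -- upper bound : limsup A ≤ ∫ f dνlim
  have hlimsup : limsup A atTop ≤ ∫ p, f p ∂νlim := by
    have hk : ∀ k : ℕ, limsup A atTop ≤ ∫ p, ψ k p ∂νlim := by
      intro k
      have hyoung := h_young (ψ k) (hψm k) ⟨C + 1, hψb k⟩ (fun x => hψc k x)
      have hle : ∀ n, A n ≤ ∫ p, ψ k p ∂(ν n) := fun n =>
        integral_mono_ae (hInt_f n) (hInt_ψ n k) ((hψdom k).filter_mono (hacn n).ae_le)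
      have hbd : IsBoundedUnder (· ≤ ·) atTop (fun n => ∫ p, ψ k p ∂(ν n)) :=
        isBoundedUnder_of ⟨C + 1, fun n => (le_abs_self _).trans
          (abs_integral_le_of_abs_le (ν n) (ψ k) (C + 1) (hψb k))⟩
      calc limsup A atTop ≤ limsup (fun n => ∫ p, ψ k p ∂(ν n)) atTop :=
            limsup_le_limsup (Filter.Eventually.of_forall hle)
              hAbd_ge.isCoboundedUnder_le hbd
      _ = ∫ p, ψ k p ∂νlim := hyoung.limsup_eq
    exact ge_of_tendsto hψint (Filter.Eventually.of_forall hk)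
  -- lower bound : ∫ f dνlim ≤ liminf A
  have hliminf : (∫ p, f p ∂νlim) ≤ liminf A atTop := by
    have hk : ∀ k : ℕ, (-∫ p, χ k p ∂νlim) ≤ liminf A atTop := by
      intro k
      have hyoung := h_young (χ k) (hχm k) ⟨C + 1, hχb k⟩ (fun x => hχc k x)
      have hle : ∀ n, (-∫ p, χ k p ∂(ν n)) ≤ A n := by
        intro n
        have h1 : ∫ p, -f p ∂(ν n) ≤ ∫ p, χ k p ∂(ν n) :=
          integral_mono_ae (hInt_f n).neg (hInt_χ n k)
            ((hχdom k).filter_mono (hacn n).ae_le)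
        rw [integral_neg] at h1
        linarith
      have hbd : IsBoundedUnder (· ≥ ·) atTop (fun n => -∫ p, χ k p ∂(ν n)) :=
        isBoundedUnder_of ⟨-(C + 1), fun n => by
          have := neg_le_of_abs_le (abs_integral_le_of_abs_le (ν n) (χ k) (C + 1) (hχb k))
          simp only [neg_le_neg_iff]
          exact (le_abs_self _).trans (abs_integral_le_of_abs_le (ν n) (χ k) (C + 1) (hχb k))⟩
      calc (-∫ p, χ k p ∂νlim) = liminf (fun n => -∫ p, χ k p ∂(ν n)) atTop :=
            (hyoung.neg.liminf_eq).symm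
      _ ≤ liminf A atTop :=
            liminf_le_liminf (Filter.Eventually.of_forall hle)
              hbd hAbd_le.isCoboundedUnder_ge
    have htend : Tendsto (fun k => -∫ p, χ k p ∂νlim) atTop (𝓝 (∫ p, f p ∂νlim)) := by
      have h1 := hχint.neg
      rw [integral_neg, neg_neg] at h1
      exact h1
    exact le_of_tendsto htend (Filter.Eventually.of_forall hk)
  exact tendsto_of_le_liminf_of_limsup_le hliminf hlimsup hAbd_le hAbd_ge

end
end
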